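/- arXiv:2512.17431 — 7 statements merged into one kernel-verified Lean document; each statement's English description precedes it below -/
import Mathlib

section
/- Every nonzero binary cubic form over ℂ is GL₂(ℂ)-equivalent to exactly one of the three canonical forms x³, x³ + y³, and 3x²y; in particular these three forms are pairwise GL₂(ℂ)-inequivalent. -/
/-- Two binary forms over ℂ (as functions) are GL₂(ℂ)-equivalent if one is obtained from
the other by an invertible linear change of variables. -/
def CubicGL2EquivC (f g : ℂ → ℂ → ℂ) : Prop :=
  ∃ p11 p12 p21 p22 : ℂ, p11 * p22 - p12 * p21 ≠ 0 ∧
    ∀ u v : ℂ, g u v = f (p11 * u + p12 * v) (p21 * u + p22 * v)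

open Polynomial in
lemma exists_pow_root (n : ℕ) (hn : 0 < n) (z : ℂ) : ∃ s : ℂ, s ^ n = z := by
  obtain ⟨s, hs⟩ := Complex.exists_root (f := X ^ n - C z)
    (by rw [Polynomial.degree_X_pow_sub_C hn]; exact_mod_cast hn)
  exact ⟨s, by simpa [sub_eq_zero] using hs⟩

open Polynomial in
lemma exists_omega : ∃ ω : ℂ, ω ^ 2 + ω + 1 = 0 := by
  obtain ⟨s, hs⟩ := Complex.exists_root (f := C 1 * X ^ 2 + C 1 * X + C 1)
    (by rw [Polynomial.degree_quadratic one_ne_zero]; norm_num)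
  exact ⟨s, by simpa using hs⟩

lemma equiv_symm {f g : ℂ → ℂ → ℂ} (h : CubicGL2EquivC f g) : CubicGL2EquivC g f := by
  obtain ⟨p, q, r, s, hd, he⟩ := h
  refine ⟨s / (p*s - q*r), -q / (p*s - q*r), -r / (p*s - q*r), p / (p*s - q*r), ?_, ?_⟩
  · field_simp
    intro h'
    have h'' : s*p - q*r = 0 := by simpa using h'
    exact hd (by linear_combination h'')
  · intro u v
    have := he (s / (p*s - q*r) * u + -q / (p*s - q*r) * v)
      (-r / (p*s - q*r) * u + p / (p*s - q*r) * v)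
    rw [this]
    congr 1 <;> field_simp <;> ring_nf <;> field_simp [(show -(r*q) + s*p ≠ 0 from fun h => hd (by linear_combination h))] <;> ring

lemma equiv_trans {f g k : ℂ → ℂ → ℂ} (h1 : CubicGL2EquivC f g) (h2 : CubicGL2EquivC g k) :
    CubicGL2EquivC f k := by
  obtain ⟨p, q, r, s, hd, he⟩ := h1
  obtain ⟨p', q', r', s', hd', he'⟩ := h2
  refine ⟨p*p' + q*r', p*q' + q*s', r*p' + s*r', r*q' + s*s', ?_, ?_⟩
  · have : (p*p' + q*r') * (r*q' + s*s') - (p*q' + q*s') * (r*p' + s*r')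
        = (p*s - q*r) * (p'*s' - q'*r') := by ring
    rw [this]; exact mul_ne_zero hd hd'
  · intro u v
    rw [he' u v, he]
    congr 1 <;> ring

lemma nb12 : ¬ CubicGL2EquivC (fun x _y => x ^ 3) (fun x y => x ^ 3 + y ^ 3) := by
  rintro ⟨p, q, r, s, hd, he⟩
  have h1 := he 1 0
  have h2 := he 1 (-1)
  have h3 := he 1 1
  simp only at h1 h2 h3
  have h0 : (p - q) ^ 3 = 0 := by linear_combination -h2
  have hpq : p - q = 0 := pow_eq_zero_iff (by norm_num) |>.mp h0
  have : (2 : ℂ) = 8 := by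
    linear_combination h3 - 8*h1 - ((p+q)^2 + 2*p*(p+q) + 4*p^2) * hpq
  norm_num at this

lemma nb13 : ¬ CubicGL2EquivC (fun x _y => x ^ 3) (fun x y => 3 * x ^ 2 * y) := by
  rintro ⟨p, q, r, s, hd, he⟩
  have h1 := he 1 0
  have h2 := he 0 1
  simp only at h1 h2
  have hp : p = 0 := pow_eq_zero_iff (n := 3) (by norm_num) |>.mp (by linear_combination -h1)
  have hq : q = 0 := pow_eq_zero_iff (n := 3) (by norm_num) |>.mp (by linear_combination -h2)
  exact hd (by rw [hp, hq]; ring)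

lemma nb23 : ¬ CubicGL2EquivC (fun x y => x ^ 3 + y ^ 3) (fun x y => 3 * x ^ 2 * y) := by
  rintro ⟨p, q, r, s, hd, he⟩
  have h1 := he 1 0
  have h2 := he 0 1
  have h3 := he 1 1
  have h4 := he 1 (-1)
  simp only at h1 h2 h3 h4
  have hA : p ^ 3 + r ^ 3 = 0 := by linear_combination -h1
  have hD : q ^ 3 + s ^ 3 = 0 := by linear_combination -h2
  have hB : p ^ 2 * q + r ^ 2 * s = 1 := by linear_combination (h4 - h3 + 2*h2) / 6
  have hC : p * q ^ 2 + r * s ^ 2 = 0 := by linear_combination (2*h1 - h3 - h4) / 6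
  by_cases hr : r = 0
  · rw [hr] at hA
    have hp : p = 0 := pow_eq_zero_iff (n := 3) (by norm_num) |>.mp (by linear_combination hA)
    exact hd (by rw [hp, hr]; ring)
  by_cases hs : s = 0
  · rw [hs] at hD
    have hq : q = 0 := pow_eq_zero_iff (n := 3) (by norm_num) |>.mp (by linear_combination hD)
    exact hd (by rw [hq, hs]; ring)
  have key : p ^ 2 * q = - (r ^ 2 * s) := by
    have hs3 : s ^ 3 ≠ 0 := pow_ne_zero _ hs
    have h5 : p ^ 2 * q * s ^ 3 = - (r ^ 2 * s) * s ^ 3 := by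
      linear_combination p^2*q*hD - (p*q^2 - r*s^2)*hC
    exact mul_right_cancel₀ hs3 h5
  have : (0 : ℂ) = 1 := by linear_combination hB - key
  norm_num at this

lemma ex0 (b c d : ℂ) (hne : ¬(b = 0 ∧ c = 0 ∧ d = 0)) :
    CubicGL2EquivC (fun x y => b * x ^ 2 * y + c * x * y ^ 2 + d * y ^ 3) (fun x _y => x ^ 3) ∨
    CubicGL2EquivC (fun x y => b * x ^ 2 * y + c * x * y ^ 2 + d * y ^ 3) (fun x y => x ^ 3 + y ^ 3) ∨
    CubicGL2EquivC (fun x y => b * x ^ 2 * y + c * x * y ^ 2 + d * y ^ 3) (fun x y => 3 * x ^ 2 * y) := by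
  by_cases hb : b = 0
  · by_cases hc : c = 0
    · -- f = d y^3, d ≠ 0
      have hd : d ≠ 0 := fun h => hne ⟨hb, hc, h⟩
      obtain ⟨s, hs⟩ := exists_pow_root 3 (by norm_num) d⁻¹
      have hs0 : s ≠ 0 := by
        intro h; rw [h] at hs; simp at hs; exact hd hs.symm
      left
      refine ⟨0, 1, s, 0, by simpa using hs0, fun u v => ?_⟩
      simp only [hb, hc]
      have : d * s ^ 3 = 1 := by rw [hs]; field_simp
      linear_combination -u^3 * this
    · -- f = y^2 (c x + d y) ~ 3 x^2 y
      right; right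
      refine ⟨-d/c, 3/c, 1, 0, by simp [hc], fun u v => ?_⟩
      simp only [hb]
      field_simp
      ring
  · -- b ≠ 0 : factor the quadratic
    obtain ⟨e, he2⟩ := exists_pow_root 2 (by norm_num) (c ^ 2 - 4 * b * d)
    by_cases he : e = 0
    · -- double root: ~ 3x²y
      right; right
      have hc2 : c ^ 2 = 4 * b * d := by
        have := he2; rw [he] at this; linear_combination -this
      set s : ℂ := -c/(2*b) with hsdef
      have hs : 2*b*s = -c := by rw [hsdef]; field_simp
      have hd2 : b*s^2 = d := by
        have h4 : 4*b*(b*s^2 - d) = 0 := by linear_combination (2*b*s - c)*hs + hc2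
        have h5 : b*s^2 - d = 0 := by
          have h40 : (4:ℂ)*b ≠ 0 := by simpa using hb
          exact (mul_eq_zero.mp h4).resolve_left h40
        linear_combination h5
      have hw : b * b⁻¹ = 1 := mul_inv_cancel₀ hb
      refine ⟨1, 3*s*b⁻¹, 0, 3*b⁻¹, ?_, fun u v => ?_⟩
      · have : (1:ℂ) * (3*b⁻¹) - 3*s*b⁻¹*0 = 3*b⁻¹ := by ring
        rw [this]
        simp [inv_ne_zero hb]
      · show 3*u^2*v = _
        linear_combination (-3*u^2*v)*hw + (-9*b⁻¹^2*u*v^2 - 27*s*b⁻¹^3*v^3)*hs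
          + (27*b⁻¹^3*v^3)*hd2
    · -- three distinct roots: ~ x³+y³
      right; left
      obtain ⟨ω, hω⟩ := exists_omega
      obtain ⟨β, hβ⟩ := exists_pow_root 3 (by norm_num) (-e/b^2)
      have hβ' : b ^ 2 * β ^ 3 = -e := by rw [hβ]; field_simp; try ring
      have hω3 : ω ^ 3 = 1 := by linear_combination (ω - 1) * hω
      have hβ0 : β ≠ 0 := by
        intro h; rw [h] at hβ'; simp at hβ'; exact he hβ'
      have hω0 : ω ≠ 0 := by intro h; rw [h] at hω; simp at hω
      have hω1 : (1:ℂ) - ω ≠ 0 := by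
        intro h
        have : ω = 1 := by linear_combination -h
        rw [this] at hω; norm_num at hω
      set s1 : ℂ := (-c + e)/(2*b) with hs1
      set s2 : ℂ := (-c - e)/(2*b) with hs2
      set α : ℂ := b*β*ω^2/e with hα
      have hα0 : α ≠ 0 := by
        rw [hα]; exact div_ne_zero (by exact mul_ne_zero (mul_ne_zero hb hβ0) (pow_ne_zero _ hω0)) he
      set P11 : ℂ := β + s1*α with hp11
      set P12 : ℂ := β*ω + s1*α with hp12
      have hfact : ∀ X Y : ℂ, b*X^2*Y + c*X*Y^2 + d*Y^3 = b*Y*(X - s1*Y)*(X - s2*Y) := by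
        intro X Y
        rw [hs1, hs2]
        field_simp
        ring_nf
        linear_combination Y^3 * he2
      have haux : (s1 - s2)*α = β*ω^2 := by rw [hs1, hs2, hα]; field_simp; ring
      have hF2 : ∀ u v : ℂ, (P11*u + P12*v) - s1*(α*u + α*v) = β*u + β*ω*v := by
        intro u v; rw [hp11, hp12]; ring
      have hF3 : ∀ u v : ℂ, (P11*u + P12*v) - s2*(α*u + α*v) = -(β*ω)*u + (-β)*v := by
        intro u v
        linear_combination (u+v)*haux + (u+v)*β*hω
      refine ⟨P11, P12, α, α, ?_, fun u v => ?_⟩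
      · have hdet : P11*α - P12*α = α*β*(1-ω) := by rw [hp11, hp12]; ring
        rw [hdet]
        exact mul_ne_zero (mul_ne_zero hα0 hβ0) hω1
      · have h1 : b*(P11*u + P12*v)^2*(α*u + α*v) + c*(P11*u + P12*v)*(α*u + α*v)^2
            + d*(α*u + α*v)^3
            = b*(α*u + α*v)*((P11*u + P12*v) - s1*(α*u + α*v))*((P11*u + P12*v) - s2*(α*u + α*v)) :=
          hfact _ _
        rw [show (fun x y => b * x ^ 2 * y + c * x * y ^ 2 + d * y ^ 3) (P11 * u + P12 * v) (α * u + α * v)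
            = b*(P11*u + P12*v)^2*(α*u + α*v) + c*(P11*u + P12*v)*(α*u + α*v)^2 + d*(α*u + α*v)^3 from by ring,
          h1, hF2 u v, hF3 u v]
        have hprod : (α*u + α*v)*(β*u + β*ω*v)*(-(β*ω)*u + (-β)*v)
            = α * (-β^2*ω) * (u^3 + v^3) := by
          linear_combination (-α*β^2*(u^2*v+u*v^2)) * hω
        have hK : b * (α * (-β^2*ω)) = 1 := by
          rw [hα]
          field_simp
          linear_combination -ω^3*hβ' + e*hω3
        calc u^3 + v^3 = b * (α * (-β^2*ω)) * (u^3+v^3) := by rw [hK]; ring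
          _ = b * ((α*u + α*v)*(β*u + β*ω*v)*(-(β*ω)*u + (-β)*v)) := by rw [hprod]; ring
          _ = b * (α*u + α*v) * (β*u + β*ω*v) * (-(β*ω)*u + (-β)*v) := by ring

open Polynomial in
lemma cubicNormalize (a b c d : ℂ) (ha : a ≠ 0) :
    ∃ B C : ℂ, CubicGL2EquivC (fun x y => a * x ^ 3 + b * x ^ 2 * y + c * x * y ^ 2 + d * y ^ 3)
      (fun x y => B * x ^ 2 * y + C * x * y ^ 2 + a * y ^ 3) := by
  obtain ⟨r, hr⟩ := Complex.exists_root (f := C a * X ^ 3 + C b * X ^ 2 + C c * X + C d)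
    (by rw [Polynomial.degree_cubic ha]; norm_num)
  have hr' : a * r ^ 3 + b * r ^ 2 + c * r + d = 0 := by
    have := hr; simp [IsRoot, eval_add, eval_mul, eval_pow] at this
    linear_combination this
  refine ⟨3*a*r^2 + 2*b*r + c, 3*a*r + b, r, 1, 1, 0, by norm_num, fun u v => ?_⟩
  show (3*a*r^2 + 2*b*r + c) * u ^ 2 * v + (3*a*r + b) * u * v ^ 2 + a * v ^ 3 = _
  linear_combination -u^3 * hr'

lemma equiv_congr {f f' g : ℂ → ℂ → ℂ} (hff' : ∀ u v, f u v = f' u v)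
    (h : CubicGL2EquivC f' g) : CubicGL2EquivC f g := by
  obtain ⟨p, q, r, s, hd, he⟩ := h
  exact ⟨p, q, r, s, hd, fun u v => (he u v).trans (hff' _ _).symm⟩


/-- Every nonzero binary cubic over ℂ is GL₂(ℂ)-equivalent to exactly one of
`x³`, `x³ + y³`, `3x²y`; in particular these three are pairwise inequivalent. -/
theorem stmt6 :
    (∀ a b c d : ℂ, ¬(a = 0 ∧ b = 0 ∧ c = 0 ∧ d = 0) →
      ((CubicGL2EquivC (fun x y => a * x ^ 3 + b * x ^ 2 * y + c * x * y ^ 2 + d * y ^ 3)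
          (fun x _y => x ^ 3) ∧
        ¬ CubicGL2EquivC (fun x y => a * x ^ 3 + b * x ^ 2 * y + c * x * y ^ 2 + d * y ^ 3)
          (fun x y => x ^ 3 + y ^ 3) ∧
        ¬ CubicGL2EquivC (fun x y => a * x ^ 3 + b * x ^ 2 * y + c * x * y ^ 2 + d * y ^ 3)
          (fun x y => 3 * x ^ 2 * y)) ∨
       (¬ CubicGL2EquivC (fun x y => a * x ^ 3 + b * x ^ 2 * y + c * x * y ^ 2 + d * y ^ 3)
          (fun x _y => x ^ 3) ∧
        CubicGL2EquivC (fun x y => a * x ^ 3 + b * x ^ 2 * y + c * x * y ^ 2 + d * y ^ 3)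
          (fun x y => x ^ 3 + y ^ 3) ∧
        ¬ CubicGL2EquivC (fun x y => a * x ^ 3 + b * x ^ 2 * y + c * x * y ^ 2 + d * y ^ 3)
          (fun x y => 3 * x ^ 2 * y)) ∨
       (¬ CubicGL2EquivC (fun x y => a * x ^ 3 + b * x ^ 2 * y + c * x * y ^ 2 + d * y ^ 3)
          (fun x _y => x ^ 3) ∧
        ¬ CubicGL2EquivC (fun x y => a * x ^ 3 + b * x ^ 2 * y + c * x * y ^ 2 + d * y ^ 3)
          (fun x y => x ^ 3 + y ^ 3) ∧
        CubicGL2EquivC (fun x y => a * x ^ 3 + b * x ^ 2 * y + c * x * y ^ 2 + d * y ^ 3)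
          (fun x y => 3 * x ^ 2 * y)))) ∧
    ¬ CubicGL2EquivC (fun x _y => x ^ 3) (fun x y => x ^ 3 + y ^ 3) ∧
    ¬ CubicGL2EquivC (fun x _y => x ^ 3) (fun x y => 3 * x ^ 2 * y) ∧
    ¬ CubicGL2EquivC (fun x y => x ^ 3 + y ^ 3) (fun x y => 3 * x ^ 2 * y) := by
  refine ⟨?_, nb12, nb13, nb23⟩
  intro a b c d hne
  have hex : CubicGL2EquivC (fun x y => a * x ^ 3 + b * x ^ 2 * y + c * x * y ^ 2 + d * y ^ 3)
        (fun x _y => x ^ 3) ∨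
      CubicGL2EquivC (fun x y => a * x ^ 3 + b * x ^ 2 * y + c * x * y ^ 2 + d * y ^ 3)
        (fun x y => x ^ 3 + y ^ 3) ∨
      CubicGL2EquivC (fun x y => a * x ^ 3 + b * x ^ 2 * y + c * x * y ^ 2 + d * y ^ 3)
        (fun x y => 3 * x ^ 2 * y) := by
    by_cases ha : a = 0
    · subst ha
      have hne' : ¬(b = 0 ∧ c = 0 ∧ d = 0) := by
        rintro ⟨h1, h2, h3⟩; exact hne ⟨rfl, h1, h2, h3⟩
      have hcong : ∀ u v : ℂ, (0:ℂ) * u ^ 3 + b * u ^ 2 * v + c * u * v ^ 2 + d * v ^ 3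
          = b * u ^ 2 * v + c * u * v ^ 2 + d * v ^ 3 := fun u v => by ring
      rcases ex0 b c d hne' with h | h | h
      · exact Or.inl (equiv_congr hcong h)
      · exact Or.inr (Or.inl (equiv_congr hcong h))
      · exact Or.inr (Or.inr (equiv_congr hcong h))
    · obtain ⟨B, C, hEq⟩ := cubicNormalize a b c d ha
      have hne' : ¬(B = 0 ∧ C = 0 ∧ a = 0) := fun h => ha h.2.2
      rcases ex0 B C a hne' with h | h | h
      · exact Or.inl (equiv_trans hEq h)
      · exact Or.inr (Or.inl (equiv_trans hEq h))
      · exact Or.inr (Or.inr (equiv_trans hEq h))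
  rcases hex with h | h | h
  · exact Or.inl ⟨h, fun h2 => nb12 (equiv_trans (equiv_symm h) h2),
      fun h3 => nb13 (equiv_trans (equiv_symm h) h3)⟩
  · exact Or.inr (Or.inl ⟨fun h1 => nb12 (equiv_trans (equiv_symm h1) h), h,
      fun h3 => nb23 (equiv_trans (equiv_symm h) h3)⟩)
  · exact Or.inr (Or.inr ⟨fun h1 => nb13 (equiv_trans (equiv_symm h1) h),
      fun h2 => nb23 (equiv_trans (equiv_symm h2) h), h⟩)
end

section
/- The binary cubics f₁(x,y) = x³ + y³ and f₂(x,y) = x³ − 3xy² are not GL₂(ℝ)-equivalent, i.e. there is no invertible real 2×2 matrix P with f₂(u,v) = f₁(p₁₁u + p₁₂v, p₂₁u + p₂₂v); nevertheless their associated 2×2×2 symmetric tensors have identical spectral data: the tensor of f₁ has exactly three eigenpair classes, represented by (1,(1,1)), (1,(0,1)) and (1,(1,0)), and the tensor of f₂ has exactly three eigenpair classes, represented by (1,(1,0)), (1,(−1/2, √3/2)) and (1,(−1/2, −√3/2)), with no eigenpair class of either tensor having eigenvalue zero. -/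
/-- `(lam, (x, y))` is an eigenpair of the 2×2×2 complex symmetric tensor associated with
the binary cubic `a x³ + 3b x²y + 3c xy² + d y³`. -/
def IsCubicEigenpair (a b c d lam x y : ℂ) : Prop :=
  (x, y) ≠ (0, 0) ∧
  a * x ^ 2 + 2 * b * x * y + c * y ^ 2 = lam * x ∧
  b * x ^ 2 + 2 * c * x * y + d * y ^ 2 = lam * y

/-- Equivalence of eigenpairs of a third-order tensor. -/
def CubicEigenpairEquiv (lam x y lam' x' y' : ℂ) : Prop :=
  ∃ t : ℂ, t ≠ 0 ∧ t * lam = lam' ∧ t * x = x' ∧ t * y = y'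

/-- GL₂(ℝ)-equivalence of real binary forms (as functions). -/
def CubicGL2EquivR (f g : ℝ → ℝ → ℝ) : Prop :=
  ∃ p11 p12 p21 p22 : ℝ, p11 * p22 - p12 * p21 ≠ 0 ∧
    ∀ u v : ℝ, g u v = f (p11 * u + p12 * v) (p21 * u + p22 * v)

lemma part1 : ¬ CubicGL2EquivR (fun x y => x ^ 3 + y ^ 3)
    (fun x y => x ^ 3 - 3 * x * y ^ 2) := by
  rintro ⟨a, b, c, d, hdet, h⟩
  have e1 : (1:ℝ)^3 - 3*1*0^2 = (a*1+b*0)^3 + (c*1+d*0)^3 := h 1 0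
  have e2 : (0:ℝ)^3 - 3*0*1^2 = (a*0+b*1)^3 + (c*0+d*1)^3 := h 0 1
  have e3 : (1:ℝ)^3 - 3*1*1^2 = (a*1+b*1)^3 + (c*1+d*1)^3 := h 1 1
  have e4 : (1:ℝ)^3 - 3*1*(-1)^2 = (a*1+b*(-1))^3 + (c*1+d*(-1))^3 := h 1 (-1)
  have h1 : a^3 + c^3 = 1 := by linear_combination -e1
  have h2 : b^3 + d^3 = 0 := by linear_combination -e2
  have h3 : a^2*b + c^2*d = 0 := by linear_combination (-e3 + e4) / 6 - h2 / 3
  have h4 : a*b^2 + c*d^2 = -1 := by linear_combination (-e3 - e4) / 6 - h1 / 3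
  have hfac : (b + d) * (b^2 - b*d + d^2) = 0 := by linear_combination h2
  rcases mul_eq_zero.mp hfac with hbd | hbd
  · -- d = -b
    have hd : d = -b := by linarith
    subst hd
    have h3' : b * ((a - c) * (a + c)) = 0 := by linear_combination h3
    rcases mul_eq_zero.mp h3' with hb | hac
    · subst hb; nlinarith [h4]
    · rcases mul_eq_zero.mp hac with hac | hac
      · have hc : a = c := by linarith
        have g1 : 2*a^3 = 1 := by linear_combination h1 + (a^2 + a*c + c^2) * hc
        have g2 : 2*a*b^2 = -1 := by linear_combination h4 + b^2 * hc
        have g3 : 2*a^3*b^2 = b^2 := by linear_combination b^2 * g1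
        have g4 : 2*a^3*b^2 = -a^2 := by linear_combination a^2 * g2
        have ha2 : a^2 = 0 := by nlinarith [sq_nonneg a, sq_nonneg b]
        have ha : a = 0 := by
          have := sq_eq_zero_iff.mp ha2
          exact this
        rw [ha] at g1
        norm_num at g1
      · have hc : c = -a := by linarith
        subst hc
        nlinarith [h4]
  · -- b = d = 0
    have hb : b = 0 ∧ d = 0 := by
      constructor <;> nlinarith [sq_nonneg (b - d), sq_nonneg (b + d), sq_nonneg b, sq_nonneg d]
    obtain ⟨hb, hd⟩ := hb; subst hb; subst hd
    nlinarith [h4]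

lemma f1_class : ∀ lam x y : ℂ, IsCubicEigenpair 1 0 0 1 lam x y →
    CubicEigenpairEquiv lam x y 1 1 1 ∨ CubicEigenpairEquiv lam x y 1 0 1 ∨
      CubicEigenpairEquiv lam x y 1 1 0 := by
  rintro lam x y ⟨hne, h1, h2⟩
  have hne' : x ≠ 0 ∨ y ≠ 0 := by
    by_contra hcon
    push_neg at hcon
    exact hne (by simp [hcon.1, hcon.2])
  have hx : x * (x - lam) = 0 := by linear_combination h1
  have hy : y * (y - lam) = 0 := by linear_combination h2
  rcases mul_eq_zero.mp hx with hx | hx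
  · -- x = 0
    have hy0 : y ≠ 0 := hne'.resolve_left (not_not.mpr hx)
    rcases mul_eq_zero.mp hy with hy | hy
    · exact absurd hy hy0
    · have hyl : y = lam := by linear_combination hy
      right; left
      exact ⟨lam⁻¹, inv_ne_zero (hyl ▸ hy0), by field_simp [hyl ▸ hy0],
        by simp [hx], by rw [hyl]; field_simp [hyl ▸ hy0]⟩
  · have hxl : x = lam := by linear_combination hx
    have hx0 : x ≠ 0 ∨ True := Or.inr trivial
    rcases mul_eq_zero.mp hy with hy | hy
    · -- y = 0, x = lam ≠ 0
      have hx0 : x ≠ 0 := hne'.resolve_right (not_not.mpr hy)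
      right; right
      exact ⟨lam⁻¹, inv_ne_zero (hxl ▸ hx0), by field_simp [hxl ▸ hx0],
        by rw [hxl]; field_simp [hxl ▸ hx0], by simp [hy]⟩
    · have hyl : y = lam := by linear_combination hy
      have hl0 : lam ≠ 0 := by
        rcases hne' with h | h
        · exact fun h0 => h (by rw [hxl, h0])
        · exact fun h0 => h (by rw [hyl, h0])
      left
      exact ⟨lam⁻¹, inv_ne_zero hl0, by field_simp,
        by rw [hxl]; field_simp, by rw [hyl]; field_simp⟩

lemma f1_ne0 : ∀ lam x y : ℂ, IsCubicEigenpair 1 0 0 1 lam x y → lam ≠ 0 := by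
  rintro lam x y ⟨hne, h1, h2⟩ h0
  subst h0
  have hx : x = 0 := by
    have : x ^ 2 = 0 := by linear_combination h1
    exact pow_eq_zero_iff (by norm_num) |>.mp this
  have hy : y = 0 := by
    have : y ^ 2 = 0 := by linear_combination h2
    exact pow_eq_zero_iff (by norm_num) |>.mp this
  exact hne (by simp [hx, hy])

lemma s3sq : ((Real.sqrt 3 : ℝ) : ℂ) ^ 2 = 3 := by
  rw [← Complex.ofReal_pow, Real.sq_sqrt (by norm_num : (3:ℝ) ≥ 0)]
  norm_num

lemma s3ne : ((Real.sqrt 3 : ℝ) : ℂ) ≠ 0 := by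
  simp only [ne_eq, Complex.ofReal_eq_zero]
  positivity

lemma f2_class : ∀ lam x y : ℂ, IsCubicEigenpair 1 0 (-1) 0 lam x y →
    CubicEigenpairEquiv lam x y 1 1 0 ∨
      CubicEigenpairEquiv lam x y 1 (-(1/2)) ((Real.sqrt 3 : ℂ) / 2) ∨
      CubicEigenpairEquiv lam x y 1 (-(1/2)) (-((Real.sqrt 3 : ℂ) / 2)) := by
  rintro lam x y ⟨hne, h1, h2⟩
  set s : ℂ := ((Real.sqrt 3 : ℝ) : ℂ) with hs
  have hne' : x ≠ 0 ∨ y ≠ 0 := by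
    by_contra hcon
    push_neg at hcon
    exact hne (by simp [hcon.1, hcon.2])
  have hy : y * (lam + 2 * x) = 0 := by linear_combination -h2
  rcases mul_eq_zero.mp hy with hy | hl
  · -- y = 0, so x ≠ 0, lam = x
    have hx0 : x ≠ 0 := hne'.resolve_right (not_not.mpr hy)
    have hxl : x = lam := by
      have : x * (x - lam) = 0 := by linear_combination h1 + y * hy
      rcases mul_eq_zero.mp this with h | h
      · exact absurd h hx0
      · linear_combination h
    left
    exact ⟨lam⁻¹, inv_ne_zero (hxl ▸ hx0), by field_simp [hxl ▸ hx0],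
      by rw [hxl]; field_simp [hxl ▸ hx0], by simp [hy]⟩
  · -- lam = -2x
    have hlam : lam = -2 * x := by linear_combination hl
    have hy2 : y ^ 2 = 3 * x ^ 2 := by linear_combination -h1 - x * hlam
    have hx0 : x ≠ 0 := by
      intro h0
      have hy0 : y = 0 := by
        have : y ^ 2 = 0 := by rw [hy2, h0]; ring
        exact pow_eq_zero_iff (by norm_num) |>.mp this
      exact hne (by simp [h0, hy0])
    have hfac : (y - s * x) * (y + s * x) = 0 := by
      have h3 : s ^ 2 = 3 := s3sq
      linear_combination hy2 - x ^ 2 * h3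
    have hl0 : lam ≠ 0 := by
      rw [hlam]; exact mul_ne_zero (by norm_num) hx0
    rcases mul_eq_zero.mp hfac with hyx | hyx
    · -- y = s x : t = 1/lam = -(2x)⁻¹, tx = -1/2, ty = -s/2
      right; right
      refine ⟨lam⁻¹, inv_ne_zero hl0, by field_simp, ?_, ?_⟩
      · rw [hlam]; field_simp [hx0]
      · have : y = s * x := by linear_combination hyx
        rw [this, hlam]; field_simp [hx0]
    · right; left
      refine ⟨lam⁻¹, inv_ne_zero hl0, by field_simp, ?_, ?_⟩
      · rw [hlam]; field_simp [hx0]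
      · have : y = -(s * x) := by linear_combination hyx
        rw [this, hlam]; field_simp [hx0]

lemma f2_ne0 : ∀ lam x y : ℂ, IsCubicEigenpair 1 0 (-1) 0 lam x y → lam ≠ 0 := by
  rintro lam x y ⟨hne, h1, h2⟩ h0
  subst h0
  have hy : y * x = 0 := by linear_combination -h2 / 2
  rcases mul_eq_zero.mp hy with hy | hx
  · have hx : x = 0 := by
      have : x ^ 2 = 0 := by linear_combination h1 + y * hy
      exact pow_eq_zero_iff (by norm_num) |>.mp this
    exact hne (by simp [hx, hy])
  · have hyy : y = 0 := by
      have : y ^ 2 = 0 := by linear_combination -h1 + x * hx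
      exact pow_eq_zero_iff (by norm_num) |>.mp this
    exact hne (by simp [hx, hyy])

lemma epA : IsCubicEigenpair 1 0 0 1 1 1 1 :=
  ⟨by simp, by norm_num, by norm_num⟩

lemma epB : IsCubicEigenpair 1 0 0 1 1 0 1 :=
  ⟨by simp, by norm_num, by norm_num⟩

lemma epC : IsCubicEigenpair 1 0 0 1 1 1 0 :=
  ⟨by simp, by norm_num, by norm_num⟩

lemma epD : IsCubicEigenpair 1 0 (-1) 0 1 1 0 :=
  ⟨by simp, by norm_num, by norm_num⟩

lemma epE : IsCubicEigenpair 1 0 (-1) 0 1 (-(1/2)) ((Real.sqrt 3 : ℂ) / 2) :=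
  ⟨by simp [s3ne], by linear_combination (-1/4 : ℂ) * s3sq, by ring⟩

lemma epF : IsCubicEigenpair 1 0 (-1) 0 1 (-(1/2)) (-((Real.sqrt 3 : ℂ) / 2)) :=
  ⟨by simp [s3ne], by linear_combination (-1/4 : ℂ) * s3sq, by ring⟩

lemma neA : ¬ CubicEigenpairEquiv 1 1 1 1 0 1 := by
  rintro ⟨t, ht, h1, h2, h3⟩
  rw [mul_one] at h1 h2
  rw [h1] at h2
  exact one_ne_zero h2

lemma neB : ¬ CubicEigenpairEquiv 1 1 1 1 1 0 := by
  rintro ⟨t, ht, h1, h2, h3⟩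
  rw [mul_one] at h1 h3
  rw [h1] at h3
  exact one_ne_zero h3

lemma neC : ¬ CubicEigenpairEquiv 1 0 1 1 1 0 := by
  rintro ⟨t, ht, h1, h2, h3⟩
  rw [mul_zero] at h2
  exact one_ne_zero h2.symm

lemma neD : ¬ CubicEigenpairEquiv 1 1 0 1 (-(1/2)) ((Real.sqrt 3 : ℂ) / 2) := by
  rintro ⟨t, ht, h1, h2, h3⟩
  rw [mul_one] at h1 h2
  rw [h1] at h2
  norm_num at h2

lemma neE : ¬ CubicEigenpairEquiv 1 1 0 1 (-(1/2)) (-((Real.sqrt 3 : ℂ) / 2)) := by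
  rintro ⟨t, ht, h1, h2, h3⟩
  rw [mul_one] at h1 h2
  rw [h1] at h2
  norm_num at h2

lemma neF : ¬ CubicEigenpairEquiv 1 (-(1/2)) ((Real.sqrt 3 : ℂ) / 2)
    1 (-(1/2)) (-((Real.sqrt 3 : ℂ) / 2)) := by
  rintro ⟨t, ht, h1, h2, h3⟩
  rw [mul_one] at h1
  subst h1
  exact s3ne (by linear_combination h3)

/-- `f₁ = x³ + y³` and `f₂ = x³ − 3xy²` are not GL₂(ℝ)-equivalent, yet their tensors
have identical spectral data: each has exactly three eigenpair classes (with the listed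
representatives) and no eigenpair class with eigenvalue zero.  Here `f₁` has cubic
coefficients `(a,b,c,d) = (1,0,0,1)` and `f₂` has `(a,b,c,d) = (1,0,−1,0)`. -/
theorem stmt7 :
    ¬ CubicGL2EquivR (fun x y => x ^ 3 + y ^ 3) (fun x y => x ^ 3 - 3 * x * y ^ 2) ∧
    -- spectral data of the tensor of f₁ = x³ + y³
    (IsCubicEigenpair 1 0 0 1 1 1 1 ∧
     IsCubicEigenpair 1 0 0 1 1 0 1 ∧
     IsCubicEigenpair 1 0 0 1 1 1 0 ∧
     ¬ CubicEigenpairEquiv 1 1 1 1 0 1 ∧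
     ¬ CubicEigenpairEquiv 1 1 1 1 1 0 ∧
     ¬ CubicEigenpairEquiv 1 0 1 1 1 0 ∧
     (∀ lam x y : ℂ, IsCubicEigenpair 1 0 0 1 lam x y →
        CubicEigenpairEquiv lam x y 1 1 1 ∨ CubicEigenpairEquiv lam x y 1 0 1 ∨
          CubicEigenpairEquiv lam x y 1 1 0) ∧
     (∀ lam x y : ℂ, IsCubicEigenpair 1 0 0 1 lam x y → lam ≠ 0)) ∧
    -- spectral data of the tensor of f₂ = x³ − 3xy²
    (IsCubicEigenpair 1 0 (-1) 0 1 1 0 ∧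
     IsCubicEigenpair 1 0 (-1) 0 1 (-(1/2)) ((Real.sqrt 3 : ℂ) / 2) ∧
     IsCubicEigenpair 1 0 (-1) 0 1 (-(1/2)) (-((Real.sqrt 3 : ℂ) / 2)) ∧
     ¬ CubicEigenpairEquiv 1 1 0 1 (-(1/2)) ((Real.sqrt 3 : ℂ) / 2) ∧
     ¬ CubicEigenpairEquiv 1 1 0 1 (-(1/2)) (-((Real.sqrt 3 : ℂ) / 2)) ∧
     ¬ CubicEigenpairEquiv 1 (-(1/2)) ((Real.sqrt 3 : ℂ) / 2)
        1 (-(1/2)) (-((Real.sqrt 3 : ℂ) / 2)) ∧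
     (∀ lam x y : ℂ, IsCubicEigenpair 1 0 (-1) 0 lam x y →
        CubicEigenpairEquiv lam x y 1 1 0 ∨
          CubicEigenpairEquiv lam x y 1 (-(1/2)) ((Real.sqrt 3 : ℂ) / 2) ∨
          CubicEigenpairEquiv lam x y 1 (-(1/2)) (-((Real.sqrt 3 : ℂ) / 2))) ∧
     (∀ lam x y : ℂ, IsCubicEigenpair 1 0 (-1) 0 lam x y → lam ≠ 0)) :=
  ⟨part1, ⟨epA, epB, epC, neA, neB, neC, f1_class, f1_ne0⟩,
    ⟨epD, epE, epF, neD, neE, neF, f2_class, f2_ne0⟩⟩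
end

section
/- Let μ ∈ ℂ with μ ≠ 1/3 and μ ≠ −1/3, let P = (p₁, p₂; p₃, p₄) be an invertible 2×2 complex matrix, and let g(u,v) = (p₁u + p₂v)⁴ + 6μ(p₁u + p₂v)²(p₃u + p₄v)² + (p₃u + p₄v)⁴. Then the gradient of g vanishes only at (u,v) = (0,0); consequently no eigenpair of the 2×2×2×2 symmetric tensor associated with g has eigenvalue zero. -/
/-- `(lam, (x, y))` is an eigenpair of the 2×2×2×2 complex symmetric tensor associated with
the binary quartic `a x⁴ + 4b x³y + 6c x²y² + 4d xy³ + e y⁴`. -/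
def IsQuarticEigenpair (a b c d e lam x y : ℂ) : Prop :=
  (x, y) ≠ (0, 0) ∧
  a * x ^ 3 + 3 * b * x ^ 2 * y + 3 * c * x * y ^ 2 + d * y ^ 3 = lam * x ∧
  b * x ^ 3 + 3 * c * x ^ 2 * y + 3 * d * x * y ^ 2 + e * y ^ 3 = lam * y

/-- For `g(u,v) = (p₁u + p₂v)⁴ + 6μ(p₁u + p₂v)²(p₃u + p₄v)² + (p₃u + p₄v)⁴` with `P`
invertible and `μ ≠ ±1/3`, the gradient of `g` vanishes only at the origin; consequently
no eigenpair of the associated tensor has eigenvalue zero. -/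
theorem stmt11 (μ p1 p2 p3 p4 : ℂ) (hμ1 : μ ≠ 1 / 3) (hμ2 : μ ≠ -(1 / 3))
    (hP : p1 * p4 - p2 * p3 ≠ 0) :
    (∀ u v : ℂ,
      4 * p1 * (p1 * u + p2 * v) ^ 3 +
        12 * μ * (p1 * (p1 * u + p2 * v) * (p3 * u + p4 * v) ^ 2 +
          p3 * (p1 * u + p2 * v) ^ 2 * (p3 * u + p4 * v)) +
        4 * p3 * (p3 * u + p4 * v) ^ 3 = 0 →
      4 * p2 * (p1 * u + p2 * v) ^ 3 +
        12 * μ * (p2 * (p1 * u + p2 * v) * (p3 * u + p4 * v) ^ 2 +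
          p4 * (p1 * u + p2 * v) ^ 2 * (p3 * u + p4 * v)) +
        4 * p4 * (p3 * u + p4 * v) ^ 3 = 0 →
      (u, v) = (0, 0)) ∧
    (∀ lam u v : ℂ,
      IsQuarticEigenpair
        (p1 ^ 4 + 6 * μ * p1 ^ 2 * p3 ^ 2 + p3 ^ 4)
        (p1 ^ 3 * p2 + 3 * μ * (p1 * p2 * p3 ^ 2 + p1 ^ 2 * p3 * p4) + p3 ^ 3 * p4)
        (p1 ^ 2 * p2 ^ 2 + μ * (p1 ^ 2 * p4 ^ 2 + 4 * p1 * p2 * p3 * p4 + p2 ^ 2 * p3 ^ 2) +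
          p3 ^ 2 * p4 ^ 2)
        (p1 * p2 ^ 3 + 3 * μ * (p2 ^ 2 * p3 * p4 + p1 * p2 * p4 ^ 2) + p3 * p4 ^ 3)
        (p2 ^ 4 + 6 * μ * p2 ^ 2 * p4 ^ 2 + p4 ^ 4) lam u v → lam ≠ 0) := by

  have key : ∀ u v : ℂ,
      4 * p1 * (p1 * u + p2 * v) ^ 3 +
        12 * μ * (p1 * (p1 * u + p2 * v) * (p3 * u + p4 * v) ^ 2 +
          p3 * (p1 * u + p2 * v) ^ 2 * (p3 * u + p4 * v)) +
        4 * p3 * (p3 * u + p4 * v) ^ 3 = 0 →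
      4 * p2 * (p1 * u + p2 * v) ^ 3 +
        12 * μ * (p2 * (p1 * u + p2 * v) * (p3 * u + p4 * v) ^ 2 +
          p4 * (p1 * u + p2 * v) ^ 2 * (p3 * u + p4 * v)) +
        4 * p4 * (p3 * u + p4 * v) ^ 3 = 0 →
      (u, v) = (0, 0) := by
    intro u v h1 h2
    set s := p1 * u + p2 * v with hs
    set t := p3 * u + p4 * v with ht
    have h4 : (4 : ℂ) ≠ 0 := by norm_num
    have hA : s * (s ^ 2 + 3 * μ * t ^ 2) = 0 := by
      have := hP
      have hAeq : (p1 * p4 - p2 * p3) * (4 * (s * (s ^ 2 + 3 * μ * t ^ 2))) = 0 := by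
        linear_combination p4 * h1 - p3 * h2
      have := mul_eq_zero.mp hAeq
      rcases this with h | h
      · exact absurd h hP
      · exact (mul_eq_zero.mp h).resolve_left h4
    have hB : t * (3 * μ * s ^ 2 + t ^ 2) = 0 := by
      have hBeq : (p1 * p4 - p2 * p3) * (4 * (t * (3 * μ * s ^ 2 + t ^ 2))) = 0 := by
        linear_combination p1 * h2 - p2 * h1
      have := mul_eq_zero.mp hBeq
      rcases this with h | h
      · exact absurd h hP
      · exact (mul_eq_zero.mp h).resolve_left h4
    have hst : s = 0 ∧ t = 0 := by
      rcases mul_eq_zero.mp hA with hs0 | hA2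
      · refine ⟨hs0, ?_⟩
        rcases mul_eq_zero.mp hB with ht0 | hB2
        · exact ht0
        · have : t ^ 2 = 0 := by rw [hs0] at hB2; linear_combination hB2
          exact pow_eq_zero_iff (by norm_num) |>.mp this
      · rcases mul_eq_zero.mp hB with ht0 | hB2
        · have : s ^ 2 = 0 := by rw [ht0] at hA2; linear_combination hA2
          have hs0 := pow_eq_zero_iff (n := 2) (by norm_num) |>.mp this
          exact ⟨hs0, ht0⟩
        · -- s² = -3μt², t² = -3μs² ⇒ (1 - 9μ²) s² = 0 and (1-9μ²) t² = 0
          have h9 : (1 - 9 * μ ^ 2) * s ^ 2 = 0 := by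
            linear_combination hA2 - 3 * μ * hB2
          have h9' : (1 - 9 * μ ^ 2) * t ^ 2 = 0 := by
            linear_combination hB2 - 3 * μ * hA2
          have hμ : (1 - 9 * μ ^ 2) ≠ 0 := by
            intro h
            have : (3 * μ - 1) * (3 * μ + 1) = 0 := by linear_combination -h
            rcases mul_eq_zero.mp this with h' | h'
            · exact hμ1 (by field_simp; linear_combination h')
            · exact hμ2 (by field_simp; linear_combination h')
          have hs2 : s ^ 2 = 0 := (mul_eq_zero.mp h9).resolve_left hμ
          have ht2 : t ^ 2 = 0 := (mul_eq_zero.mp h9').resolve_left hμ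
          exact ⟨pow_eq_zero_iff (n := 2) (by norm_num) |>.mp hs2,
            pow_eq_zero_iff (n := 2) (by norm_num) |>.mp ht2⟩
    obtain ⟨hs0, ht0⟩ := hst
    have hu : (p1 * p4 - p2 * p3) * u = 0 := by
      rw [hs] at hs0; rw [ht] at ht0
      linear_combination p4 * hs0 - p2 * ht0
    have hv : (p1 * p4 - p2 * p3) * v = 0 := by
      rw [hs] at hs0; rw [ht] at ht0
      linear_combination p1 * ht0 - p3 * hs0
    have hu0 := (mul_eq_zero.mp hu).resolve_left hP
    have hv0 := (mul_eq_zero.mp hv).resolve_left hP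
    simp [hu0, hv0]
  refine ⟨key, ?_⟩
  rintro lam u v ⟨hne, he1, he2⟩ rfl
  have h1 : 4 * p1 * (p1 * u + p2 * v) ^ 3 +
        12 * μ * (p1 * (p1 * u + p2 * v) * (p3 * u + p4 * v) ^ 2 +
          p3 * (p1 * u + p2 * v) ^ 2 * (p3 * u + p4 * v)) +
        4 * p3 * (p3 * u + p4 * v) ^ 3 = 0 := by linear_combination 4 * he1
  have h2 : 4 * p2 * (p1 * u + p2 * v) ^ 3 +
        12 * μ * (p2 * (p1 * u + p2 * v) * (p3 * u + p4 * v) ^ 2 +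
          p4 * (p1 * u + p2 * v) ^ 2 * (p3 * u + p4 * v)) +
        4 * p4 * (p3 * u + p4 * v) ^ 3 = 0 := by linear_combination 4 * he2
  exact hne (key u v h1 h2)
end

section
/- Let μ ∈ ℂ with μ ≠ 1/3 and μ ≠ −1/3. The 2×2×2×2 complex symmetric tensor associated with the binary quartic f(x,y) = x⁴ + 6μx²y² + y⁴ has exactly four eigenpair classes, namely the classes of (1,(1,0)), (1,(0,1)), (1+3μ,(1,1)) and (1+3μ,(1,−1)); in particular no eigenpair class has eigenvalue zero. -/
/-- Equivalence of eigenpairs of a fourth-order tensor. -/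
def QuarticEigenpairEquiv (lam x y lam' x' y' : ℂ) : Prop :=
  ∃ t : ℂ, t ≠ 0 ∧ t ^ 2 * lam = lam' ∧ t * x = x' ∧ t * y = y'

lemma classify (μ : ℂ) (hμ1 : μ ≠ 1 / 3) :
    ∀ lam x y : ℂ, IsQuarticEigenpair 1 0 μ 0 1 lam x y →
      QuarticEigenpairEquiv lam x y 1 1 0 ∨ QuarticEigenpairEquiv lam x y 1 0 1 ∨
        QuarticEigenpairEquiv lam x y (1 + 3 * μ) 1 1 ∨
        QuarticEigenpairEquiv lam x y (1 + 3 * μ) 1 (-1) := by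
  rintro lam x y ⟨hne, h1, h2⟩
  by_cases hy : y = 0
  · have hx : x ≠ 0 := fun hx => hne (by simp [hx, hy])
    subst hy
    have hl : lam = x ^ 2 := by
      have h : x * (x ^ 2 - lam) = 0 := by linear_combination h1
      rcases mul_eq_zero.1 h with h | h
      · exact absurd h hx
      · linear_combination -h
    left
    exact ⟨x⁻¹, inv_ne_zero hx, by field_simp [hl]; linear_combination hl, by field_simp, by simp⟩
  · by_cases hx : x = 0
    · subst hx
      have hl : lam = y ^ 2 := by
        have h : y * (y ^ 2 - lam) = 0 := by linear_combination h2
        rcases mul_eq_zero.1 h with h | h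
        · exact absurd h hy
        · linear_combination -h
      right; left
      exact ⟨y⁻¹, inv_ne_zero hy, by field_simp [hl]; linear_combination hl, by simp, by field_simp⟩
    · have e1 : x ^ 2 + 3 * μ * y ^ 2 = lam := by
        have h : x * (x ^ 2 + 3 * μ * y ^ 2 - lam) = 0 := by linear_combination h1
        rcases mul_eq_zero.1 h with h | h
        · exact absurd h hx
        · linear_combination h
      have e2 : 3 * μ * x ^ 2 + y ^ 2 = lam := by
        have h : y * (3 * μ * x ^ 2 + y ^ 2 - lam) = 0 := by linear_combination h2
        rcases mul_eq_zero.1 h with h | h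
        · exact absurd h hy
        · linear_combination h
      have h13 : (1 : ℂ) - 3 * μ ≠ 0 := by
        intro h; apply hμ1; linear_combination -h / 3
      have hsq : (y - x) * (y + x) = 0 := by
        have h : (1 - 3 * μ) * ((y - x) * (y + x)) = 0 := by
          linear_combination e2 - e1
        rcases mul_eq_zero.1 h with h | h
        · exact absurd h h13
        · exact h
      rcases mul_eq_zero.1 hsq with h | h
      · have hyx : y = x := by linear_combination h
        have hl : lam = (1 + 3 * μ) * x ^ 2 := by
          rw [hyx] at e1; linear_combination -e1
        right; right; left
        exact ⟨x⁻¹, inv_ne_zero hx, by field_simp [hl]; linear_combination hl, by field_simp,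
          by rw [hyx]; field_simp⟩
      · have hyx : y = -x := by linear_combination h
        have hl : lam = (1 + 3 * μ) * x ^ 2 := by
          rw [hyx] at e1; linear_combination -e1
        right; right; right
        exact ⟨x⁻¹, inv_ne_zero hx, by field_simp [hl]; linear_combination hl, by field_simp,
          by rw [hyx]; field_simp⟩

/-- For `μ ≠ ±1/3`, the tensor of `f(x,y) = x⁴ + 6μx²y² + y⁴`
(quartic coefficients `(a,b,c,d,e) = (1,0,μ,0,1)`) has exactly four eigenpair classes,
represented by `(1,(1,0))`, `(1,(0,1))`, `(1+3μ,(1,1))` and `(1+3μ,(1,−1))`;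
no class has eigenvalue zero. -/
theorem stmt12 (μ : ℂ) (hμ1 : μ ≠ 1 / 3) (hμ2 : μ ≠ -(1 / 3)) :
    IsQuarticEigenpair 1 0 μ 0 1 1 1 0 ∧
    IsQuarticEigenpair 1 0 μ 0 1 1 0 1 ∧
    IsQuarticEigenpair 1 0 μ 0 1 (1 + 3 * μ) 1 1 ∧
    IsQuarticEigenpair 1 0 μ 0 1 (1 + 3 * μ) 1 (-1) ∧
    ¬ QuarticEigenpairEquiv 1 1 0 1 0 1 ∧
    ¬ QuarticEigenpairEquiv 1 1 0 (1 + 3 * μ) 1 1 ∧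
    ¬ QuarticEigenpairEquiv 1 1 0 (1 + 3 * μ) 1 (-1) ∧
    ¬ QuarticEigenpairEquiv 1 0 1 (1 + 3 * μ) 1 1 ∧
    ¬ QuarticEigenpairEquiv 1 0 1 (1 + 3 * μ) 1 (-1) ∧
    ¬ QuarticEigenpairEquiv (1 + 3 * μ) 1 1 (1 + 3 * μ) 1 (-1) ∧
    (∀ lam x y : ℂ, IsQuarticEigenpair 1 0 μ 0 1 lam x y →
      QuarticEigenpairEquiv lam x y 1 1 0 ∨ QuarticEigenpairEquiv lam x y 1 0 1 ∨
        QuarticEigenpairEquiv lam x y (1 + 3 * μ) 1 1 ∨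
        QuarticEigenpairEquiv lam x y (1 + 3 * μ) 1 (-1)) ∧
    (∀ lam x y : ℂ, IsQuarticEigenpair 1 0 μ 0 1 lam x y → lam ≠ 0) := by
  have h3 : (1 : ℂ) + 3 * μ ≠ 0 := by
    intro h; apply hμ2; linear_combination h / 3
  refine ⟨⟨by simp, by ring, by ring⟩, ⟨by simp, by ring, by ring⟩,
    ⟨by simp, by ring, by ring⟩, ⟨by simp, by ring, by ring⟩,
    ?_, ?_, ?_, ?_, ?_, ?_, classify μ hμ1, ?_⟩
  · rintro ⟨t, ht, -, h, -⟩; exact ht (by simpa using h)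
  · rintro ⟨t, ht, -, -, h⟩; simp at h
  · rintro ⟨t, ht, -, -, h⟩; simp at h
  · rintro ⟨t, ht, -, h, -⟩; simp at h
  · rintro ⟨t, ht, -, h, -⟩; simp at h
  · rintro ⟨t, ht, -, h1, h2⟩
    rw [mul_one] at h1 h2
    rw [h1] at h2
    norm_num at h2
  · intro lam x y hep
    rcases classify μ hμ1 lam x y hep with ⟨t, ht, h, -⟩ | ⟨t, ht, h, -⟩ |
      ⟨t, ht, h, -⟩ | ⟨t, ht, h, -⟩ <;> intro h0 <;> rw [h0, mul_zero] at h
    · exact one_ne_zero h.symm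
    · exact one_ne_zero h.symm
    · exact h3 h.symm
    · exact h3 h.symm
end

section
/- The 2×2×2×2 complex symmetric tensor associated with the binary quartic f(x,y) = 4x³y has exactly three eigenpair classes, namely the classes of (0,(0,1)), (√3,(1, √3/3)) and (−√3,(1, −√3/3)); in particular exactly one of its eigenpair classes has eigenvalue zero. -/
/-- The tensor of `f(x,y) = 4x³y` (quartic coefficients `(0,1,0,0,0)`) has exactly three
eigenpair classes, represented by `(0,(0,1))`, `(√3,(1,√3/3))` and `(−√3,(1,−√3/3))`;
exactly one class has eigenvalue zero. -/
theorem stmt16 :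
    IsQuarticEigenpair 0 1 0 0 0 0 0 1 ∧
    IsQuarticEigenpair 0 1 0 0 0 (Real.sqrt 3 : ℂ) 1 ((Real.sqrt 3 : ℂ) / 3) ∧
    IsQuarticEigenpair 0 1 0 0 0 (-(Real.sqrt 3 : ℂ)) 1 (-((Real.sqrt 3 : ℂ) / 3)) ∧
    ¬ QuarticEigenpairEquiv 0 0 1 (Real.sqrt 3 : ℂ) 1 ((Real.sqrt 3 : ℂ) / 3) ∧
    ¬ QuarticEigenpairEquiv 0 0 1 (-(Real.sqrt 3 : ℂ)) 1 (-((Real.sqrt 3 : ℂ) / 3)) ∧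
    ¬ QuarticEigenpairEquiv (Real.sqrt 3 : ℂ) 1 ((Real.sqrt 3 : ℂ) / 3)
        (-(Real.sqrt 3 : ℂ)) 1 (-((Real.sqrt 3 : ℂ) / 3)) ∧
    (∀ lam x y : ℂ, IsQuarticEigenpair 0 1 0 0 0 lam x y →
      QuarticEigenpairEquiv lam x y 0 0 1 ∨
        QuarticEigenpairEquiv lam x y (Real.sqrt 3 : ℂ) 1 ((Real.sqrt 3 : ℂ) / 3) ∨
        QuarticEigenpairEquiv lam x y (-(Real.sqrt 3 : ℂ)) 1 (-((Real.sqrt 3 : ℂ) / 3))) ∧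
    (∀ lam x y : ℂ, IsQuarticEigenpair 0 1 0 0 0 lam x y →
      (lam = 0 ↔ QuarticEigenpairEquiv lam x y 0 0 1)) := by
  set s : ℂ := (Real.sqrt 3 : ℂ) with hsdef
  have hs : s ^ 2 = 3 := by
    rw [hsdef]
    exact_mod_cast Real.sq_sqrt (by norm_num : (0:ℝ) ≤ 3)
  have hs0 : s ≠ 0 := by
    intro h; rw [h] at hs; norm_num at hs
  refine ⟨⟨by simp, by ring, by ring⟩,
    ⟨by simp, by ring, by linear_combination -hs / 3⟩,
    ⟨by simp, by ring, by linear_combination -hs / 3⟩, ?_, ?_, ?_, ?_, ?_⟩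
  · rintro ⟨t, ht, h1, h2, h3⟩
    simp at h2
  · rintro ⟨t, ht, h1, h2, h3⟩
    simp at h2
  · rintro ⟨t, ht, h1, h2, h3⟩
    rw [mul_one] at h2
    subst h2
    exact hs0 (by linear_combination h1 / 2)
  · rintro lam x y ⟨hne, h1, h2⟩
    by_cases hx : x = 0
    · subst hx
      have hy : y ≠ 0 := by
        intro h; exact hne (by simp [h])
      have hlam : lam = 0 := by
        have h2' : lam * y = 0 := by linear_combination -h2
        exact (mul_eq_zero.mp h2').resolve_right hy
      exact Or.inl ⟨y⁻¹, inv_ne_zero hy, by simp [hlam], by simp,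
        inv_mul_cancel₀ hy⟩
    · have hlam : lam = 3 * x * y := by
        have := mul_left_cancel₀ hx (show x * lam = x * (3 * x * y) by
          linear_combination -h1)
        exact this
      have hxy : x ^ 2 = 3 * y ^ 2 :=
        mul_left_cancel₀ hx (by linear_combination h2 + y * hlam)
      have hfact : (x - s * y) * (x + s * y) = 0 := by
        linear_combination hxy - y ^ 2 * hs
      have hy : y ≠ 0 := by
        intro hy0
        apply hx
        have : x ^ 2 = 0 := by rw [hxy, hy0]; ring
        exact pow_eq_zero_iff (by norm_num) |>.mp this
      rcases mul_eq_zero.mp hfact with h | h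
      · have hx' : x = s * y := by linear_combination h
        refine Or.inr (Or.inl ⟨x⁻¹, inv_ne_zero hx, ?_, inv_mul_cancel₀ hx, ?_⟩)
        · rw [hlam, hx']
          field_simp
          linear_combination -hs
        · rw [hx']
          field_simp
          linear_combination -hs
      · have hx' : x = -(s * y) := by linear_combination h
        refine Or.inr (Or.inr ⟨x⁻¹, inv_ne_zero hx, ?_, inv_mul_cancel₀ hx, ?_⟩)
        · rw [hlam, hx']
          field_simp
          linear_combination hs
        · rw [hx']
          field_simp
          linear_combination hs
  · rintro lam x y ⟨hne, h1, h2⟩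
    constructor
    · rintro rfl
      have hx : x = 0 := by
        have h2' : x ^ 3 = 0 := by linear_combination h2
        exact pow_eq_zero_iff (by norm_num) |>.mp h2'
      have hy : y ≠ 0 := by
        intro h; exact hne (by simp [hx, h])
      exact ⟨y⁻¹, inv_ne_zero hy, by ring, by simp [hx], inv_mul_cancel₀ hy⟩
    · rintro ⟨t, ht, he, -, -⟩
      exact (mul_eq_zero.mp he).resolve_left (pow_ne_zero 2 ht)
end

section
/- Every nonzero binary quartic form over ℂ is GL₂(ℂ)-equivalent to at least one of the following canonical forms: x⁴; x⁴ + 6μx²y² + y⁴ for some μ ∈ ℂ with μ ≠ ±1/3; 6x²y² + y⁴; 6x²y²; 4x³y. Moreover, any two canonical forms taken from distinct items of this list are not GL₂(ℂ)-equivalent. -/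
/-- Two binary forms over ℂ (as functions) are GL₂(ℂ)-equivalent if one is obtained from
the other by an invertible linear change of variables. -/
def QuarticGL2EquivC (f g : ℂ → ℂ → ℂ) : Prop :=
  ∃ p11 p12 p21 p22 : ℂ, p11 * p22 - p12 * p21 ≠ 0 ∧
    ∀ u v : ℂ, g u v = f (p11 * u + p12 * v) (p21 * u + p22 * v)

open Polynomial in
lemma exists_sqrtC (w : ℂ) : ∃ s : ℂ, s^2 = w :=
  IsAlgClosed.exists_pow_nat_eq w zero_lt_two

open Polynomial in
lemma exists_4root (w : ℂ) : ∃ s : ℂ, s^4 = w :=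
  IsAlgClosed.exists_pow_nat_eq w (by norm_num)

open Polynomial in
lemma monic_quartic_root (b c d e : ℂ) : ∃ s : ℂ, s^4 + b*s^3 + c*s^2 + d*s + e = 0 := by
  obtain ⟨s, hs⟩ := IsAlgClosed.exists_root
    (X^4 + C b * X^3 + C c * X^2 + C d * X + C e) (by
      have : (X^4 + C b * X^3 + C c * X^2 + C d * X + C e : ℂ[X]).degree = 4 := by
        compute_degree!
      rw [this]; norm_num)
  exact ⟨s, by simpa [Polynomial.IsRoot] using hs⟩

open Polynomial in
lemma monic_cubic_root (b c d : ℂ) : ∃ s : ℂ, s^3 + b*s^2 + c*s + d = 0 := by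
  obtain ⟨s, hs⟩ := IsAlgClosed.exists_root
    (X^3 + C b * X^2 + C c * X + C d) (by
      have : (X^3 + C b * X^2 + C c * X + C d : ℂ[X]).degree = 3 := by compute_degree!
      rw [this]; norm_num)
  exact ⟨s, by simpa [Polynomial.IsRoot] using hs⟩

open Polynomial in
lemma monic_quadratic_root (b c : ℂ) : ∃ s : ℂ, s^2 + b*s + c = 0 := by
  obtain ⟨s, hs⟩ := IsAlgClosed.exists_root
    (X^2 + C b * X + C c) (by
      have : (X^2 + C b * X + C c : ℂ[X]).degree = 2 := by compute_degree!
      rw [this]; norm_num)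
  exact ⟨s, by simpa [Polynomial.IsRoot] using hs⟩

lemma monic_quartic_factor (b c d e : ℂ) :
    ∃ r1 r2 r3 r4 : ℂ, ∀ x : ℂ,
      x^4 + b*x^3 + c*x^2 + d*x + e = (x - r1)*(x - r2)*(x - r3)*(x - r4) := by
  obtain ⟨r1, h1⟩ := monic_quartic_root b c d e
  obtain ⟨r2, h2⟩ := monic_cubic_root (b + r1) (c + b*r1 + r1^2) (d + c*r1 + b*r1^2 + r1^3)
  obtain ⟨r3, h3⟩ := monic_quadratic_root (b + r1 + r2) (c + b*r1 + r1^2 + (b + r1)*r2 + r2^2)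
  refine ⟨r1, r2, r3, -(b + r1 + r2 + r3), fun x => ?_⟩
  linear_combination h1 + (x - r1)*h2 + (x - r1)*(x - r2)*h3

lemma equiv_aux (F T : ℂ → ℂ → ℂ) (a r1 r2 r3 r4 p11 p12 p21 p22 K : ℂ)
    (hF : ∀ x y, F x y = a*(x - r1*y)*(x - r2*y)*(x - r3*y)*(x - r4*y))
    (hdet : p11*p22 - p12*p21 ≠ 0) (hK : K ≠ 0)
    (hid : ∀ u v, K * T u v = F (p11*u + p12*v) (p21*u + p22*v)) :
    QuarticGL2EquivC F T := by
  obtain ⟨k, hk⟩ := exists_4root K⁻¹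
  have hk0 : k ≠ 0 := by
    intro h
    rw [h] at hk
    exact inv_ne_zero hK (by linear_combination -hk)
  refine ⟨k*p11, k*p12, k*p21, k*p22, ?_, ?_⟩
  · have : k*p11*(k*p22) - k*p12*(k*p21) = k^2*(p11*p22 - p12*p21) := by ring
    rw [this]
    exact mul_ne_zero (pow_ne_zero 2 hk0) hdet
  · intro u v
    have h2 : F (k*p11*u + k*p12*v) (k*p21*u + k*p22*v)
        = k^4 * F (p11*u + p12*v) (p21*u + p22*v) := by
      rw [hF, hF]; ring
    rw [h2, ← hid u v, hk, inv_mul_cancel_left₀ hK]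

lemma case1 (F : ℂ → ℂ → ℂ) (a r : ℂ) (ha : a ≠ 0)
    (hF : ∀ x y, F x y = a*(x - r*y)*(x - r*y)*(x - r*y)*(x - r*y)) :
    QuarticGL2EquivC F (fun x _y => x ^ 4) := by
  refine equiv_aux F _ a r r r r 1 r 0 1 a hF (by norm_num) ha fun u v => ?_
  rw [hF]; ring

lemma case2 (F : ℂ → ℂ → ℂ) (a r t : ℂ) (ha : a ≠ 0) (hrt : r ≠ t)
    (hF : ∀ x y, F x y = a*(x - r*y)*(x - r*y)*(x - r*y)*(x - t*y)) :
    QuarticGL2EquivC F (fun x y => 4 * x ^ 3 * y) := by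
  have h : t - r ≠ 0 := sub_ne_zero.mpr (Ne.symm hrt)
  refine equiv_aux F _ a r r r t t r 1 1 (-(a*(t-r)^4)/4) hF
    (by simpa using h) (by
      apply div_ne_zero _ (by norm_num)
      exact neg_ne_zero.mpr (mul_ne_zero ha (pow_ne_zero 4 h)))
    fun u v => ?_
  rw [hF]; ring

lemma case3 (F : ℂ → ℂ → ℂ) (a r t : ℂ) (ha : a ≠ 0) (hrt : r ≠ t)
    (hF : ∀ x y, F x y = a*(x - r*y)*(x - r*y)*(x - t*y)*(x - t*y)) :
    QuarticGL2EquivC F (fun x y => 6 * x ^ 2 * y ^ 2) := by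
  have h : t - r ≠ 0 := sub_ne_zero.mpr (Ne.symm hrt)
  refine equiv_aux F _ a r r t t t r 1 1 (a*(t-r)^4/6) hF
    (by simpa using h)
    (div_ne_zero (mul_ne_zero ha (pow_ne_zero 4 h)) (by norm_num))
    fun u v => ?_
  rw [hF]; ring

lemma case4 (F : ℂ → ℂ → ℂ) (a r s t : ℂ) (ha : a ≠ 0)
    (hrs : r ≠ s) (hrt : r ≠ t) (hst : s ≠ t)
    (hF : ∀ x y, F x y = a*(x - r*y)*(x - r*y)*(x - s*y)*(x - t*y)) :
    QuarticGL2EquivC F (fun x y => 6 * x ^ 2 * y ^ 2 + y ^ 4) := by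
  obtain ⟨γ, hγ⟩ := exists_sqrtC (-6)
  have hγ0 : γ ≠ 0 := by intro h; rw [h] at hγ; norm_num at hγ
  have hsr : s - r ≠ 0 := sub_ne_zero.mpr (Ne.symm hrs)
  have hst' : s - t ≠ 0 := sub_ne_zero.mpr hst
  have hrt' : r - t ≠ 0 := sub_ne_zero.mpr hrt
  -- lam = s - t, m2 = 2(r-t)
  refine equiv_aux F _ a r r s t
    ((s-t)*r*γ) (2*(r-t)*s - (s-t)*r) ((s-t)*γ) (2*(r-t) - (s-t))
    (a * (2*(r-t)*(s-r))^2 * ((s-t)*(s-r)) * ((s-t)*(r-t))) hF ?_ ?_ fun u v => ?_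
  · have e : (s-t)*r*γ*(2*(r-t) - (s-t)) - (2*(r-t)*s - (s-t)*r)*((s-t)*γ)
        = (s-t)*γ*(2*(r-t))*(r - s) := by ring
    rw [e]
    refine mul_ne_zero (mul_ne_zero (mul_ne_zero hst' hγ0) (by
      exact mul_ne_zero two_ne_zero hrt')) (sub_ne_zero.mpr hrs)
  · refine mul_ne_zero (mul_ne_zero (mul_ne_zero ha (pow_ne_zero 2 ?_)) ?_) ?_
    · exact mul_ne_zero (mul_ne_zero two_ne_zero hrt') hsr
    · exact mul_ne_zero hst' hsr
    · exact mul_ne_zero hst' hrt'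
  · rw [hF]
    linear_combination ((a * (2*(r-t)*(s-r))^2 * ((s-t)*(s-r)) * ((s-t)*(r-t))) * u^2*v^2) * hγ

lemma case5' (F : ℂ → ℂ → ℂ) (a r1 r2 r3 r4 : ℂ) (ha : a ≠ 0)
    (h12 : r1 ≠ r2) (h13 : r1 ≠ r3) (h14 : r1 ≠ r4)
    (h23 : r2 ≠ r3) (h24 : r2 ≠ r4) (h34 : r3 ≠ r4)
    (hm : r1 + r2 - r3 - r4 ≠ 0)
    (hF : ∀ x y, F x y = a*(x - r1*y)*(x - r2*y)*(x - r3*y)*(x - r4*y)) :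
    ∃ μ : ℂ, μ ≠ 1/3 ∧ μ ≠ -(1/3) ∧
      QuarticGL2EquivC F (fun x y => x^4 + 6*μ*x^2*y^2 + y^4) := by
  have hpq : (r1 - r2)*(r3 - r4) ≠ 0 :=
    mul_ne_zero (sub_ne_zero.mpr h12) (sub_ne_zero.mpr h34)
  obtain ⟨w, hw0⟩ := monic_quadratic_root
    ((4*r3*r4 + 4*r1*r2 - 2*(r1+r2)*(r3+r4))/((r1 - r2)*(r3 - r4))) 1
  have hg : (r1-r2)*(r3-r4)*w^2 + (4*r3*r4 + 4*r1*r2 - 2*(r1+r2)*(r3+r4))*w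
      + (r1-r2)*(r3-r4) = 0 := by
    field_simp at hw0
    linear_combination hw0
  have hw0' : w ≠ 0 := by
    intro h; rw [h] at hg; exact hpq (by linear_combination hg)
  have hw1 : w ≠ 1 := by
    intro h; rw [h] at hg
    exact mul_ne_zero (sub_ne_zero.mpr h13) (sub_ne_zero.mpr h24)
      (by linear_combination hg/4)
  have hwm1 : w ≠ -1 := by
    intro h; rw [h] at hg
    exact mul_ne_zero (sub_ne_zero.mpr h14) (sub_ne_zero.mpr (Ne.symm h23))
      (by linear_combination hg/4)
  obtain ⟨α, hα⟩ := exists_sqrtC w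
  have hα0 : α ≠ 0 := by intro h; rw [h] at hα; exact hw0' (by linear_combination -hα)
  have hα1 : α^2 ≠ 1 := by rw [hα]; exact hw1
  have hαm1 : α^2 ≠ -1 := by rw [hα]; exact hwm1
  have hgα : (r1-r2)*(r3-r4)*α^4 + (4*r3*r4 + 4*r1*r2 - 2*(r1+r2)*(r3+r4))*α^2
      + (r1-r2)*(r3-r4) = 0 := by
    linear_combination ((r1-r2)*(r3-r4)*(α^2+w) + (4*r3*r4 + 4*r1*r2 - 2*(r1+r2)*(r3+r4)))*hα + hg
  obtain ⟨C2, hC2⟩ : ∃ z : ℂ, z = 2*((r3-r4)*α^2 - (r1-r2)) := ⟨_, rfl⟩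
  obtain ⟨D2, hD2⟩ : ∃ z : ℂ, z = 2*(r1+r2-r3-r4)*α := ⟨_, rfl⟩
  obtain ⟨A0, hA0⟩ : ∃ z : ℂ,
    z = (r1+r2)*((r3-r4)*α^2 - (r1-r2)) + (r1-r2)*(r1+r2-r3-r4) := ⟨_, rfl⟩
  obtain ⟨B0, hB0⟩ : ∃ z : ℂ,
    z = α*((r1-r2)*((r3-r4)*α^2 - (r1-r2)) + (r1+r2)*(r1+r2-r3-r4)) := ⟨_, rfl⟩
  obtain ⟨c1, hc1⟩ : ∃ z : ℂ, z = A0 - r1*C2 := ⟨_, rfl⟩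
  obtain ⟨c2, hc2⟩ : ∃ z : ℂ, z = A0 - r2*C2 := ⟨_, rfl⟩
  obtain ⟨c3, hc3⟩ : ∃ z : ℂ, z = r3*D2 - B0 := ⟨_, rfl⟩
  obtain ⟨c4, hc4⟩ : ∃ z : ℂ, z = B0 - r4*D2 := ⟨_, rfl⟩
  have h1 : B0 - r1*D2 = -(c1*α) := by
    rw [hc1, hA0, hB0, hC2, hD2]; ring
  have h2 : B0 - r2*D2 = c2*α := by
    rw [hc2, hA0, hB0, hC2, hD2]; ring
  have h3 : A0 - r3*C2 = c3*α := by
    rw [hc3, hA0, hB0, hC2, hD2]; linear_combination hgα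
  have h4 : A0 - r4*C2 = c4*α := by
    rw [hc4, hA0, hB0, hC2, hD2]; linear_combination -hgα
  have hD2' : D2 ≠ 0 := by
    rw [hD2]; exact mul_ne_zero (mul_ne_zero two_ne_zero hm) hα0
  have E1 : A0*D2 - B0*C2 = c1*(D2 + α*C2) := by
    linear_combination (-D2)*hc1 - C2*h1
  have E2 : A0*D2 - B0*C2 = c2*(D2 - α*C2) := by
    linear_combination (-D2)*hc2 - C2*h2
  have E3 : A0*D2 - B0*C2 = c3*(α*D2 + C2) := by
    linear_combination D2*h3 - C2*hc3
  have E4 : A0*D2 - B0*C2 = c4*(α*D2 - C2) := by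
    linear_combination D2*h4 + C2*hc4
  have hdet : A0*D2 - B0*C2 ≠ 0 := by
    intro h0
    have P1 : c1 = 0 ∨ D2 + α*C2 = 0 := mul_eq_zero.mp (by rw [← E1]; exact h0)
    have P2 : c2 = 0 ∨ D2 - α*C2 = 0 := mul_eq_zero.mp (by rw [← E2]; exact h0)
    have P3 : c3 = 0 ∨ α*D2 + C2 = 0 := mul_eq_zero.mp (by rw [← E3]; exact h0)
    have P4 : c4 = 0 ∨ α*D2 - C2 = 0 := mul_eq_zero.mp (by rw [← E4]; exact h0)
    -- from P1,P2 derive : D2 = α*C2 ∨ D2 = -(α*C2)  (or contradiction)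
    have Q12 : D2 + α*C2 = 0 ∨ D2 - α*C2 = 0 := by
      rcases P1 with h1' | h1'
      · rcases P2 with h2' | h2'
        · -- c1 = c2 = 0 ⇒ C2 = 0 and D2 = 0
          exfalso
          have hD20 : D2 = 0 := by
            have : (r2 - r1)*D2 = 0 := by
              linear_combination h1 - h2 - α*h1' - α*h2'
            exact (mul_eq_zero.mp this).resolve_left
              (sub_ne_zero.mpr (Ne.symm h12))
          exact hD2' hD20
        · exact Or.inr h2'
      · exact Or.inl h1'
    have Q34 : α*D2 + C2 = 0 ∨ α*D2 - C2 = 0 := by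
      rcases P3 with h3' | h3'
      · rcases P4 with h4' | h4'
        · exfalso
          have : (r3 - r4)*D2 = 0 := by linear_combination -hc3 - hc4 + h3' + h4'
          exact hD2' ((mul_eq_zero.mp this).resolve_left (sub_ne_zero.mpr h34))
        · exact Or.inr h4'
      · exact Or.inl h3'
    have hC20 : C2 = 0 := by
      rcases Q12 with hq | hq <;> rcases Q34 with hq' | hq'
      · have : C2*(1 - α^2) = 0 := by linear_combination hq' - α*hq
        rcases mul_eq_zero.mp this with h | h
        · exact h
        · exact absurd (by linear_combination -h : α^2 = 1) hα1
      · have : C2*(1 + α^2) = 0 := by linear_combination α*hq - hq'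
        rcases mul_eq_zero.mp this with h | h
        · exact h
        · exact absurd (by linear_combination h : α^2 = -1) hαm1
      · have : C2*(1 + α^2) = 0 := by linear_combination hq' - α*hq
        rcases mul_eq_zero.mp this with h | h
        · exact h
        · exact absurd (by linear_combination h : α^2 = -1) hαm1
      · have : C2*(1 - α^2) = 0 := by linear_combination α*hq - hq'
        rcases mul_eq_zero.mp this with h | h
        · exact h
        · exact absurd (by linear_combination -h : α^2 = 1) hα1
    have hD20 : D2 = 0 := by
      rcases Q12 with hq | hq
      · linear_combination hq - α*hC20
      · linear_combination hq + α*hC20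
    exact hD2' hD20
  have hc10 : c1 ≠ 0 := fun h => hdet (by rw [E1, h]; ring)
  have hc20 : c2 ≠ 0 := fun h => hdet (by rw [E2, h]; ring)
  have hc30 : c3 ≠ 0 := fun h => hdet (by rw [E3, h]; ring)
  have hc40 : c4 ≠ 0 := fun h => hdet (by rw [E4, h]; ring)
  obtain ⟨μ, hμ⟩ : ∃ z : ℂ, z = -(α^4+1)/(6*α^2) := ⟨_, rfl⟩
  have hμ' : μ*(6*α^2) = -(α^4+1) := by
    rw [hμ]; field_simp
  have hμ13 : μ ≠ 1/3 := by
    intro h; rw [h] at hμ'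
    have h2 : (α^2 + 1)^2 = 0 := by linear_combination hμ'
    exact hαm1 (by linear_combination (pow_eq_zero_iff two_ne_zero).mp h2)
  have hμm13 : μ ≠ -(1/3) := by
    intro h; rw [h] at hμ'
    have h2 : (α^2 - 1)^2 = 0 := by linear_combination hμ'
    exact hα1 (by linear_combination (pow_eq_zero_iff two_ne_zero).mp h2)
  refine ⟨μ, hμ13, hμm13, equiv_aux F _ a r1 r2 r3 r4 A0 B0 C2 D2
    (a*c1*c2*c3*c4*α^2) hF hdet
    (mul_ne_zero (mul_ne_zero (mul_ne_zero (mul_ne_zero (mul_ne_zero ha hc10) hc20) hc30) hc40)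
      (pow_ne_zero 2 hα0)) ?_⟩
  intro u v
  have e1 : A0*u + B0*v - r1*(C2*u + D2*v) = c1*(u - α*v) := by
    linear_combination (-u)*hc1 + v*h1
  have e2 : A0*u + B0*v - r2*(C2*u + D2*v) = c2*(u + α*v) := by
    linear_combination (-u)*hc2 + v*h2
  have e3 : A0*u + B0*v - r3*(C2*u + D2*v) = c3*(α*u - v) := by
    linear_combination u*h3 + v*hc3
  have e4 : A0*u + B0*v - r4*(C2*u + D2*v) = c4*(α*u + v) := by
    linear_combination u*h4 - v*hc4
  rw [hF, e1, e2, e3, e4]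
  linear_combination (a*c1*c2*c3*c4*u^2*v^2)*hμ'

lemma case5 (F : ℂ → ℂ → ℂ) (a r1 r2 r3 r4 : ℂ) (ha : a ≠ 0)
    (h12 : r1 ≠ r2) (h13 : r1 ≠ r3) (h14 : r1 ≠ r4)
    (h23 : r2 ≠ r3) (h24 : r2 ≠ r4) (h34 : r3 ≠ r4)
    (hF : ∀ x y, F x y = a*(x - r1*y)*(x - r2*y)*(x - r3*y)*(x - r4*y)) :
    ∃ μ : ℂ, μ ≠ 1/3 ∧ μ ≠ -(1/3) ∧
      QuarticGL2EquivC F (fun x y => x^4 + 6*μ*x^2*y^2 + y^4) := by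
  by_cases hm : r1 + r2 - r3 - r4 = 0
  · refine case5' F a r1 r3 r2 r4 ha h13 h12 h14 (Ne.symm h23) h34 h24 ?_ ?_
    · intro h
      exact h23 (by linear_combination (hm - h)/2)
    · intro x y; rw [hF]; ring
  · exact case5' F a r1 r2 r3 r4 ha h12 h13 h14 h23 h24 h34 hm hF

/-- Main existence result when the leading coefficient is nonzero. -/
lemma key (F : ℂ → ℂ → ℂ) (a b c d e : ℂ) (ha : a ≠ 0)
    (hFdef : ∀ x y, F x y = a * x ^ 4 + b * x ^ 3 * y + c * x ^ 2 * y ^ 2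
      + d * x * y ^ 3 + e * y ^ 4) :
    (QuarticGL2EquivC F (fun x _y => x ^ 4) ∨
      (∃ μ : ℂ, μ ≠ 1 / 3 ∧ μ ≠ -(1 / 3) ∧
        QuarticGL2EquivC F (fun x y => x ^ 4 + 6 * μ * x ^ 2 * y ^ 2 + y ^ 4)) ∨
      QuarticGL2EquivC F (fun x y => 6 * x ^ 2 * y ^ 2 + y ^ 4) ∨
      QuarticGL2EquivC F (fun x y => 6 * x ^ 2 * y ^ 2) ∨
      QuarticGL2EquivC F (fun x y => 4 * x ^ 3 * y)) := by
  obtain ⟨r1, r2, r3, r4, hfac⟩ := monic_quartic_factor (b/a) (c/a) (d/a) (e/a)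
  have hfac' : ∀ x : ℂ, a*x^4 + b*x^3 + c*x^2 + d*x + e
      = a*(x - r1)*(x - r2)*(x - r3)*(x - r4) := by
    intro x
    calc a*x^4 + b*x^3 + c*x^2 + d*x + e
        = a*(x^4 + (b/a)*x^3 + (c/a)*x^2 + (d/a)*x + e/a) := by field_simp
      _ = a*(x - r1)*(x - r2)*(x - r3)*(x - r4) := by rw [hfac x]; ring
  have hF : ∀ x y : ℂ, F x y = a*(x - r1*y)*(x - r2*y)*(x - r3*y)*(x - r4*y) := by
    intro x y
    rw [hFdef]
    linear_combination ((x^2-y^2)*(x^2-4*y^2)/4) * (hfac' 0)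
      + (-(x*(x+y)*(x-2*y)*(x+2*y))/6) * (hfac' 1)
      + (-(x*(x-y)*(x-2*y)*(x+2*y))/6) * (hfac' (-1))
      + (x*(x+2*y)*(x^2-y^2)/24) * (hfac' 2)
      + (x*(x-2*y)*(x^2-y^2)/24) * (hfac' (-2))
  clear hfac hfac' hFdef
  by_cases h12 : r1 = r2
  · subst h12
    by_cases h13 : r1 = r3
    · subst h13
      by_cases h14 : r1 = r4
      · subst h14
        exact Or.inl (case1 F a r1 ha hF)
      · exact Or.inr (Or.inr (Or.inr (Or.inr (case2 F a r1 r4 ha h14 hF))))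
    · by_cases h14 : r1 = r4
      · subst h14
        refine Or.inr (Or.inr (Or.inr (Or.inr (case2 F a r1 r3 ha h13 ?_))))
        intro x y; rw [hF]; ring
      · by_cases h34 : r3 = r4
        · subst h34
          exact Or.inr (Or.inr (Or.inr (Or.inl (case3 F a r1 r3 ha h13 hF))))
        · exact Or.inr (Or.inr (Or.inl (case4 F a r1 r3 r4 ha h13 h14 h34 hF)))
  · by_cases h13 : r1 = r3
    · subst h13
      by_cases h14 : r1 = r4
      · subst h14
        refine Or.inr (Or.inr (Or.inr (Or.inr (case2 F a r1 r2 ha ?_ ?_))))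
        · exact fun h => h12 h
        · intro x y; rw [hF]; ring
      · by_cases h24 : r2 = r4
        · subst h24
          refine Or.inr (Or.inr (Or.inr (Or.inl (case3 F a r1 r2 ha (fun h => h12 h) ?_))))
          intro x y; rw [hF]; ring
        · refine Or.inr (Or.inr (Or.inl (case4 F a r1 r2 r4 ha (fun h => h12 h) h14 h24 ?_)))
          intro x y; rw [hF]; ring
    · by_cases h14 : r1 = r4
      · subst h14
        by_cases h23 : r2 = r3
        · subst h23
          refine Or.inr (Or.inr (Or.inr (Or.inl (case3 F a r1 r2 ha (fun h => h12 h) ?_))))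
          intro x y; rw [hF]; ring
        · refine Or.inr (Or.inr (Or.inl (case4 F a r1 r2 r3 ha (fun h => h12 h) h13 h23 ?_)))
          intro x y; rw [hF]; ring
      · by_cases h23 : r2 = r3
        · subst h23
          by_cases h24 : r2 = r4
          · subst h24
            refine Or.inr (Or.inr (Or.inr (Or.inr (case2 F a r2 r1 ha (fun h => h12 h.symm) ?_))))
            intro x y; rw [hF]; ring
          · refine Or.inr (Or.inr (Or.inl (case4 F a r2 r1 r4 ha
              (fun h => h12 h.symm) h24 h14 ?_)))
            intro x y; rw [hF]; ring
        · by_cases h24 : r2 = r4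
          · subst h24
            refine Or.inr (Or.inr (Or.inl (case4 F a r2 r1 r3 ha
              (fun h => h12 h.symm) h23 h13 ?_)))
            intro x y; rw [hF]; ring
          · by_cases h34 : r3 = r4
            · subst h34
              refine Or.inr (Or.inr (Or.inl (case4 F a r3 r1 r2 ha
                (fun h => h13 h.symm) (fun h => h23 h.symm) h12 ?_)))
              intro x y; rw [hF]; ring
            · exact Or.inr (Or.inl (case5 F a r1 r2 r3 r4 ha h12 h13 h14 h23 h24 h34 hF))

lemma find_t (a b c d e : ℂ) (h : ¬(a = 0 ∧ b = 0 ∧ c = 0 ∧ d = 0 ∧ e = 0)) :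
    ∃ t : ℂ, a + b*t + c*t^2 + d*t^3 + e*t^4 ≠ 0 := by
  by_contra hc
  push_neg at hc
  have h0 := hc 0
  have h1 := hc 1
  have hm1 := hc (-1)
  have h2 := hc 2
  have hm2 := hc (-2)
  refine h ⟨by linear_combination h0,
    by linear_combination (2/3)*h1 - (2/3)*hm1 - (1/12)*h2 + (1/12)*hm2,
    by linear_combination (-5/4)*h0 + (2/3)*h1 + (2/3)*hm1 - (1/24)*h2 - (1/24)*hm2,
    by linear_combination (-1/6)*h1 + (1/6)*hm1 + (1/12)*h2 - (1/12)*hm2,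
    by linear_combination (1/4)*h0 - (1/6)*h1 - (1/6)*hm1 + (1/24)*h2 + (1/24)*hm2⟩

lemma equiv_comp (F G T : ℂ → ℂ → ℂ) (q11 q12 q21 q22 : ℂ)
    (hq : q11*q22 - q12*q21 ≠ 0)
    (hG : ∀ u v, G u v = F (q11*u + q12*v) (q21*u + q22*v))
    (h : QuarticGL2EquivC G T) : QuarticGL2EquivC F T := by
  obtain ⟨p11, p12, p21, p22, hdet, heq⟩ := h
  refine ⟨q11*p11 + q12*p21, q11*p12 + q12*p22, q21*p11 + q22*p21, q21*p12 + q22*p22, ?_, ?_⟩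
  · have e : (q11*p11 + q12*p21)*(q21*p12 + q22*p22) - (q11*p12 + q12*p22)*(q21*p11 + q22*p21)
        = (q11*q22 - q12*q21)*(p11*p22 - p12*p21) := by ring
    rw [e]
    exact mul_ne_zero hq hdet
  · intro u v
    rw [heq u v, hG]
    rw [show q11*(p11*u + p12*v) + q12*(p21*u + p22*v)
        = (q11*p11 + q12*p21)*u + (q11*p12 + q12*p22)*v from by ring,
      show q21*(p11*u + p12*v) + q22*(p21*u + p22*v)
        = (q21*p11 + q22*p21)*u + (q21*p12 + q22*p22)*v from by ring]

theorem part1_s17 : ∀ a b c d e : ℂ, ¬(a = 0 ∧ b = 0 ∧ c = 0 ∧ d = 0 ∧ e = 0) →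
      (QuarticGL2EquivC
          (fun x y => a * x ^ 4 + b * x ^ 3 * y + c * x ^ 2 * y ^ 2 + d * x * y ^ 3 + e * y ^ 4)
          (fun x _y => x ^ 4) ∨
        (∃ μ : ℂ, μ ≠ 1 / 3 ∧ μ ≠ -(1 / 3) ∧
          QuarticGL2EquivC
            (fun x y => a * x ^ 4 + b * x ^ 3 * y + c * x ^ 2 * y ^ 2 + d * x * y ^ 3 + e * y ^ 4)
            (fun x y => x ^ 4 + 6 * μ * x ^ 2 * y ^ 2 + y ^ 4)) ∨
        QuarticGL2EquivC
          (fun x y => a * x ^ 4 + b * x ^ 3 * y + c * x ^ 2 * y ^ 2 + d * x * y ^ 3 + e * y ^ 4)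
          (fun x y => 6 * x ^ 2 * y ^ 2 + y ^ 4) ∨
        QuarticGL2EquivC
          (fun x y => a * x ^ 4 + b * x ^ 3 * y + c * x ^ 2 * y ^ 2 + d * x * y ^ 3 + e * y ^ 4)
          (fun x y => 6 * x ^ 2 * y ^ 2) ∨
        QuarticGL2EquivC
          (fun x y => a * x ^ 4 + b * x ^ 3 * y + c * x ^ 2 * y ^ 2 + d * x * y ^ 3 + e * y ^ 4)
          (fun x y => 4 * x ^ 3 * y)) := by
  intro a b c d e h
  obtain ⟨t, ht⟩ := find_t a b c d e h
  set F : ℂ → ℂ → ℂ :=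
    fun x y => a * x ^ 4 + b * x ^ 3 * y + c * x ^ 2 * y ^ 2 + d * x * y ^ 3 + e * y ^ 4
    with hFdef
  have hG : ∀ u v : ℂ, (a + b*t + c*t^2 + d*t^3 + e*t^4) * u ^ 4
      + (b + 2*c*t + 3*d*t^2 + 4*e*t^3) * u ^ 3 * v
      + (c + 3*d*t + 6*e*t^2) * u ^ 2 * v ^ 2
      + (d + 4*e*t) * u * v ^ 3 + e * v ^ 4
      = F (1*u + 0*v) (t*u + 1*v) := by
    intro u v
    show _ = a * (1*u + 0*v) ^ 4 + b * (1*u + 0*v) ^ 3 * (t*u + 1*v)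
      + c * (1*u + 0*v) ^ 2 * (t*u + 1*v) ^ 2 + d * (1*u + 0*v) * (t*u + 1*v) ^ 3
      + e * (t*u + 1*v) ^ 4
    ring
  have hkey := key (fun u v => (a + b*t + c*t^2 + d*t^3 + e*t^4) * u ^ 4
      + (b + 2*c*t + 3*d*t^2 + 4*e*t^3) * u ^ 3 * v
      + (c + 3*d*t + 6*e*t^2) * u ^ 2 * v ^ 2
      + (d + 4*e*t) * u * v ^ 3 + e * v ^ 4)
    (a + b*t + c*t^2 + d*t^3 + e*t^4) (b + 2*c*t + 3*d*t^2 + 4*e*t^3)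
    (c + 3*d*t + 6*e*t^2) (d + 4*e*t) e ht (fun x y => rfl)
  have hq : (1:ℂ)*1 - 0*t ≠ 0 := by norm_num
  rcases hkey with h' | ⟨μ, hμ1, hμ2, h'⟩ | h' | h' | h'
  · exact Or.inl (equiv_comp F _ _ 1 0 t 1 hq hG h')
  · exact Or.inr (Or.inl ⟨μ, hμ1, hμ2, equiv_comp F _ _ 1 0 t 1 hq hG h'⟩)
  · exact Or.inr (Or.inr (Or.inl (equiv_comp F _ _ 1 0 t 1 hq hG h')))
  · exact Or.inr (Or.inr (Or.inr (Or.inl (equiv_comp F _ _ 1 0 t 1 hq hG h'))))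
  · exact Or.inr (Or.inr (Or.inr (Or.inr (equiv_comp F _ _ 1 0 t 1 hq hG h'))))

lemma lindep {p q u1 v1 u2 v2 : ℂ} (h1 : p*u1 + q*v1 = 0) (h2 : p*u2 + q*v2 = 0)
    (hind : u1*v2 - u2*v1 ≠ 0) : p = 0 ∧ q = 0 := by
  constructor
  · have h : p*(u1*v2 - u2*v1) = 0 := by linear_combination v2*h1 - v1*h2
    exact (mul_eq_zero.mp h).resolve_right hind
  · have h : q*(u1*v2 - u2*v1) = 0 := by linear_combination (-u2)*h1 + u1*h2
    exact (mul_eq_zero.mp h).resolve_right hind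

lemma not_equiv_x4 (T : ℂ → ℂ → ℂ) (u1 v1 u2 v2 : ℂ)
    (hz1 : T u1 v1 = 0) (hz2 : T u2 v2 = 0) (hind : u1*v2 - u2*v1 ≠ 0) :
    ¬ QuarticGL2EquivC (fun x _y => x ^ 4) T := by
  rintro ⟨p11, p12, p21, p22, hdet, heq⟩
  have h1 : T u1 v1 = (p11*u1 + p12*v1)^4 := heq u1 v1
  have h2 : T u2 v2 = (p11*u2 + p12*v2)^4 := heq u2 v2
  rw [hz1] at h1
  rw [hz2] at h2
  have e1 : p11*u1 + p12*v1 = 0 := pow_eq_zero_iff (by norm_num : 4 ≠ 0) |>.mp h1.symm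
  have e2 : p11*u2 + p12*v2 = 0 := pow_eq_zero_iff (by norm_num : 4 ≠ 0) |>.mp h2.symm
  obtain ⟨hp1, hp2⟩ := lindep e1 e2 hind
  exact hdet (by rw [hp1, hp2]; ring)

lemma mu_roots (μ : ℂ) (hμ1 : μ ≠ 1/3) (hμ2 : μ ≠ -(1/3)) :
    ∃ α β : ℂ, α^4 + 6*μ*α^2 + 1 = 0 ∧ β^4 + 6*μ*β^2 + 1 = 0 ∧
      α ≠ 0 ∧ β ≠ 0 ∧ α ≠ β ∧ α ≠ -β := by
  have h9 : 9*μ^2 - 1 ≠ 0 := by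
    intro h
    have : (3*μ - 1)*(3*μ + 1) = 0 := by linear_combination h
    rcases mul_eq_zero.mp this with h' | h'
    · exact hμ1 (by linear_combination h'/3)
    · exact hμ2 (by linear_combination h'/3)
  obtain ⟨s, hs⟩ := exists_sqrtC (9*μ^2 - 1)
  have hs0 : s ≠ 0 := fun h => h9 (by rw [h] at hs; linear_combination -hs)
  obtain ⟨α, hα⟩ := exists_sqrtC (-3*μ + s)
  obtain ⟨β, hβ⟩ := exists_sqrtC (-3*μ - s)
  have hprod : (-3*μ + s)*(-3*μ - s) = 1 := by linear_combination -hs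
  have hval1 : α^4 + 6*μ*α^2 + 1 = 0 := by
    linear_combination (α^2 + (-3*μ + s) + 6*μ)*hα + hs
  have hval2 : β^4 + 6*μ*β^2 + 1 = 0 := by
    linear_combination (β^2 + (-3*μ - s) + 6*μ)*hβ + hs
  have hab : α^2 ≠ β^2 := by
    rw [hα, hβ]
    intro h
    exact hs0 (by linear_combination h/2)
  have hα0 : α ≠ 0 := by
    intro h
    rw [h] at hα
    rw [show (-3*μ + s) = (0:ℂ)^2 from hα.symm] at hprod
    exact one_ne_zero (by linear_combination -hprod)
  have hβ0 : β ≠ 0 := by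
    intro h
    rw [h] at hβ
    rw [show (-3*μ - s) = (0:ℂ)^2 from hβ.symm] at hprod
    exact one_ne_zero (by linear_combination -hprod)
  exact ⟨α, β, hval1, hval2, hα0, hβ0,
    fun h => hab (by rw [h]),
    fun h => hab (by rw [h]; ring)⟩

-- item 2
lemma item2 : ∀ μ : ℂ, μ ≠ 1 / 3 → μ ≠ -(1 / 3) →
    ¬ QuarticGL2EquivC (fun x _y => x ^ 4)
      (fun x y => x ^ 4 + 6 * μ * x ^ 2 * y ^ 2 + y ^ 4) := by
  intro μ hμ1 hμ2
  obtain ⟨α, β, hval1, hval2, hα0, hβ0, hab, hab'⟩ := mu_roots μ hμ1 hμ2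
  refine not_equiv_x4 _ α 1 β 1 ?_ ?_ ?_
  · show α ^ 4 + 6 * μ * α ^ 2 * 1 ^ 2 + 1 ^ 4 = 0
    linear_combination hval1
  · show β ^ 4 + 6 * μ * β ^ 2 * 1 ^ 2 + 1 ^ 4 = 0
    linear_combination hval2
  · intro h
    exact hab (by linear_combination h)

-- item 3
lemma item3 : ¬ QuarticGL2EquivC (fun x _y => x ^ 4) (fun x y => 6 * x ^ 2 * y ^ 2 + y ^ 4) := by
  obtain ⟨δ, hδ⟩ := exists_sqrtC (-(1/6))
  refine not_equiv_x4 _ 1 0 δ 1 ?_ ?_ ?_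
  · show 6 * 1 ^ 2 * 0 ^ 2 + 0 ^ 4 = (0:ℂ)
    norm_num
  · show 6 * δ ^ 2 * 1 ^ 2 + 1 ^ 4 = 0
    linear_combination 6*hδ
  · intro h
    norm_num at h

-- item 4
lemma item4 : ¬ QuarticGL2EquivC (fun x _y => x ^ 4) (fun x y => 6 * x ^ 2 * y ^ 2) := by
  refine not_equiv_x4 _ 1 0 0 1 ?_ ?_ ?_
  · show 6 * 1 ^ 2 * 0 ^ 2 = (0:ℂ); norm_num
  · show 6 * 0 ^ 2 * 1 ^ 2 = (0:ℂ); norm_num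
  · norm_num

-- item 5
lemma item5 : ¬ QuarticGL2EquivC (fun x _y => x ^ 4) (fun x y => 4 * x ^ 3 * y) := by
  refine not_equiv_x4 _ 1 0 0 1 ?_ ?_ ?_
  · show 4 * 1 ^ 3 * 0 = (0:ℂ); norm_num
  · show 4 * 0 ^ 3 * 1 = (0:ℂ); norm_num
  · norm_num

lemma item6 : ∀ μ : ℂ, μ ≠ 1 / 3 → μ ≠ -(1 / 3) →
    ¬ QuarticGL2EquivC (fun x y => x ^ 4 + 6 * μ * x ^ 2 * y ^ 2 + y ^ 4)
      (fun x y => 6 * x ^ 2 * y ^ 2 + y ^ 4) := by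
  intro μ hμ1 hμ2
  obtain ⟨α, β, hval1, hval2, hα0, hβ0, hab, hab'⟩ := mu_roots μ hμ1 hμ2
  obtain ⟨γ, hγ⟩ := exists_sqrtC (-6)
  rintro ⟨p11, p12, p21, p22, hdet, heq⟩
  obtain ⟨U1, hU1⟩ : ∃ z:ℂ, z = p22*α - p12*1 := ⟨_, rfl⟩
  obtain ⟨V1, hV1⟩ : ∃ z:ℂ, z = p11*1 - p21*α := ⟨_, rfl⟩
  obtain ⟨U2, hU2⟩ : ∃ z:ℂ, z = p22*(-α) - p12*1 := ⟨_, rfl⟩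
  obtain ⟨V2, hV2⟩ : ∃ z:ℂ, z = p11*1 - p21*(-α) := ⟨_, rfl⟩
  obtain ⟨U3, hU3⟩ : ∃ z:ℂ, z = p22*β - p12*1 := ⟨_, rfl⟩
  obtain ⟨V3, hV3⟩ : ∃ z:ℂ, z = p11*1 - p21*β := ⟨_, rfl⟩
  obtain ⟨U4, hU4⟩ : ∃ z:ℂ, z = p22*(-β) - p12*1 := ⟨_, rfl⟩
  obtain ⟨V4, hV4⟩ : ∃ z:ℂ, z = p11*1 - p21*(-β) := ⟨_, rfl⟩
  have hT1 : 6*U1^2*V1^2 + V1^4 = 0 := by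
    have h : 6*U1^2*V1^2 + V1^4 = (p11*U1 + p12*V1)^4
        + 6*μ*(p11*U1 + p12*V1)^2*(p21*U1 + p22*V1)^2 + (p21*U1 + p22*V1)^4 := heq U1 V1
    rw [h, hU1, hV1]
    linear_combination ((p11*p22 - p12*p21)^4) * hval1
  have hT2 : 6*U2^2*V2^2 + V2^4 = 0 := by
    have h : 6*U2^2*V2^2 + V2^4 = (p11*U2 + p12*V2)^4
        + 6*μ*(p11*U2 + p12*V2)^2*(p21*U2 + p22*V2)^2 + (p21*U2 + p22*V2)^4 := heq U2 V2
    rw [h, hU2, hV2]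
    linear_combination ((p11*p22 - p12*p21)^4) * hval1
  have hT3 : 6*U3^2*V3^2 + V3^4 = 0 := by
    have h : 6*U3^2*V3^2 + V3^4 = (p11*U3 + p12*V3)^4
        + 6*μ*(p11*U3 + p12*V3)^2*(p21*U3 + p22*V3)^2 + (p21*U3 + p22*V3)^4 := heq U3 V3
    rw [h, hU3, hV3]
    linear_combination ((p11*p22 - p12*p21)^4) * hval2
  have hT4 : 6*U4^2*V4^2 + V4^4 = 0 := by
    have h : 6*U4^2*V4^2 + V4^4 = (p11*U4 + p12*V4)^4
        + 6*μ*(p11*U4 + p12*V4)^2*(p21*U4 + p22*V4)^2 + (p21*U4 + p22*V4)^4 := heq U4 V4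
    rw [h, hU4, hV4]
    linear_combination ((p11*p22 - p12*p21)^4) * hval2
  have mkd : ∀ U V : ℂ, 6*U^2*V^2 + V^4 = 0 → V = 0 ∨ V = γ*U ∨ V = -(γ*U) := by
    intro U V hT
    have hp : V^2*((V - γ*U)*(V + γ*U)) = 0 := by
      linear_combination hT - U^2*V^2*hγ
    rcases mul_eq_zero.mp hp with h' | h'
    · exact Or.inl (pow_eq_zero_iff two_ne_zero |>.mp h')
    · rcases mul_eq_zero.mp h' with h'' | h''
      · exact Or.inr (Or.inl (sub_eq_zero.mp h''))
      · exact Or.inr (Or.inr (eq_neg_of_add_eq_zero_left h''))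
  have hd1 := mkd U1 V1 hT1
  have hd2 := mkd U2 V2 hT2
  have hd3 := mkd U3 V3 hT3
  have hd4 := mkd U4 V4 hT4
  have hαβ : α + β ≠ 0 := fun h => hab' (eq_neg_of_add_eq_zero_left h)
  have d12 : U1*V2 - U2*V1 ≠ 0 := by
    have e : U1*V2 - U2*V1 = (p11*p22 - p12*p21)*(2*α) := by rw [hU1,hV1,hU2,hV2]; ring
    rw [e]; exact mul_ne_zero hdet (mul_ne_zero two_ne_zero hα0)
  have d13 : U1*V3 - U3*V1 ≠ 0 := by
    have e : U1*V3 - U3*V1 = (p11*p22 - p12*p21)*(α - β) := by rw [hU1,hV1,hU3,hV3]; ring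
    rw [e]; exact mul_ne_zero hdet (sub_ne_zero.mpr hab)
  have d14 : U1*V4 - U4*V1 ≠ 0 := by
    have e : U1*V4 - U4*V1 = (p11*p22 - p12*p21)*(α + β) := by rw [hU1,hV1,hU4,hV4]; ring
    rw [e]; exact mul_ne_zero hdet hαβ
  have d23 : U2*V3 - U3*V2 ≠ 0 := by
    have e : U2*V3 - U3*V2 = (p11*p22 - p12*p21)*(-(α + β)) := by rw [hU2,hV2,hU3,hV3]; ring
    rw [e]; exact mul_ne_zero hdet (neg_ne_zero.mpr hαβ)
  have d24 : U2*V4 - U4*V2 ≠ 0 := by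
    have e : U2*V4 - U4*V2 = (p11*p22 - p12*p21)*(β - α) := by rw [hU2,hV2,hU4,hV4]; ring
    rw [e]; exact mul_ne_zero hdet (sub_ne_zero.mpr (Ne.symm hab))
  have d34 : U3*V4 - U4*V3 ≠ 0 := by
    have e : U3*V4 - U4*V3 = (p11*p22 - p12*p21)*(2*β) := by rw [hU3,hV3,hU4,hV4]; ring
    rw [e]; exact mul_ne_zero hdet (mul_ne_zero two_ne_zero hβ0)
  rcases hd1 with h1 | h1 | h1 <;> rcases hd2 with h2 | h2 | h2 <;>
    rcases hd3 with h3 | h3 | h3 <;> rcases hd4 with h4 | h4 | h4 <;>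
    first
    | (apply d12; rw [h1, h2]; ring1)
    | (apply d13; rw [h1, h3]; ring1)
    | (apply d14; rw [h1, h4]; ring1)
    | (apply d23; rw [h2, h3]; ring1)
    | (apply d24; rw [h2, h4]; ring1)
    | (apply d34; rw [h3, h4]; ring1)

lemma item7 : ∀ μ : ℂ, μ ≠ 1 / 3 → μ ≠ -(1 / 3) →
    ¬ QuarticGL2EquivC (fun x y => x ^ 4 + 6 * μ * x ^ 2 * y ^ 2 + y ^ 4)
      (fun x y => 6 * x ^ 2 * y ^ 2) := by
  intro μ hμ1 hμ2
  obtain ⟨α, β, hval1, hval2, hα0, hβ0, hab, hab'⟩ := mu_roots μ hμ1 hμ2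
  rintro ⟨p11, p12, p21, p22, hdet, heq⟩
  obtain ⟨U1, hU1⟩ : ∃ z:ℂ, z = p22*α - p12*1 := ⟨_, rfl⟩
  obtain ⟨V1, hV1⟩ : ∃ z:ℂ, z = p11*1 - p21*α := ⟨_, rfl⟩
  obtain ⟨U2, hU2⟩ : ∃ z:ℂ, z = p22*(-α) - p12*1 := ⟨_, rfl⟩
  obtain ⟨V2, hV2⟩ : ∃ z:ℂ, z = p11*1 - p21*(-α) := ⟨_, rfl⟩
  obtain ⟨U3, hU3⟩ : ∃ z:ℂ, z = p22*β - p12*1 := ⟨_, rfl⟩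
  obtain ⟨V3, hV3⟩ : ∃ z:ℂ, z = p11*1 - p21*β := ⟨_, rfl⟩
  have hT1 : 6*U1^2*V1^2 = 0 := by
    have h : 6*U1^2*V1^2 = (p11*U1 + p12*V1)^4
        + 6*μ*(p11*U1 + p12*V1)^2*(p21*U1 + p22*V1)^2 + (p21*U1 + p22*V1)^4 := heq U1 V1
    rw [h, hU1, hV1]
    linear_combination ((p11*p22 - p12*p21)^4) * hval1
  have hT2 : 6*U2^2*V2^2 = 0 := by
    have h : 6*U2^2*V2^2 = (p11*U2 + p12*V2)^4
        + 6*μ*(p11*U2 + p12*V2)^2*(p21*U2 + p22*V2)^2 + (p21*U2 + p22*V2)^4 := heq U2 V2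
    rw [h, hU2, hV2]
    linear_combination ((p11*p22 - p12*p21)^4) * hval1
  have hT3 : 6*U3^2*V3^2 = 0 := by
    have h : 6*U3^2*V3^2 = (p11*U3 + p12*V3)^4
        + 6*μ*(p11*U3 + p12*V3)^2*(p21*U3 + p22*V3)^2 + (p21*U3 + p22*V3)^4 := heq U3 V3
    rw [h, hU3, hV3]
    linear_combination ((p11*p22 - p12*p21)^4) * hval2
  have mkd : ∀ U V : ℂ, 6*U^2*V^2 = 0 → U = 0 ∨ V = 0 := by
    intro U V hT
    have hp : (U*V)^2 = 0 := by linear_combination hT/6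
    exact mul_eq_zero.mp (pow_eq_zero_iff two_ne_zero |>.mp hp)
  have hd1 := mkd U1 V1 hT1
  have hd2 := mkd U2 V2 hT2
  have hd3 := mkd U3 V3 hT3
  have d12 : U1*V2 - U2*V1 ≠ 0 := by
    have e : U1*V2 - U2*V1 = (p11*p22 - p12*p21)*(2*α) := by rw [hU1,hV1,hU2,hV2]; ring
    rw [e]; exact mul_ne_zero hdet (mul_ne_zero two_ne_zero hα0)
  have d13 : U1*V3 - U3*V1 ≠ 0 := by
    have e : U1*V3 - U3*V1 = (p11*p22 - p12*p21)*(α - β) := by rw [hU1,hV1,hU3,hV3]; ring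
    rw [e]; exact mul_ne_zero hdet (sub_ne_zero.mpr hab)
  have d23 : U2*V3 - U3*V2 ≠ 0 := by
    have e : U2*V3 - U3*V2 = (p11*p22 - p12*p21)*(-(α + β)) := by rw [hU2,hV2,hU3,hV3]; ring
    rw [e]
    exact mul_ne_zero hdet (neg_ne_zero.mpr (fun h => hab' (eq_neg_of_add_eq_zero_left h)))
  rcases hd1 with h1 | h1 <;> rcases hd2 with h2 | h2 <;> rcases hd3 with h3 | h3 <;>
    first
    | (apply d12; rw [h1, h2]; ring1)
    | (apply d13; rw [h1, h3]; ring1)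
    | (apply d23; rw [h2, h3]; ring1)

lemma item8 : ∀ μ : ℂ, μ ≠ 1 / 3 → μ ≠ -(1 / 3) →
    ¬ QuarticGL2EquivC (fun x y => x ^ 4 + 6 * μ * x ^ 2 * y ^ 2 + y ^ 4)
      (fun x y => 4 * x ^ 3 * y) := by
  intro μ hμ1 hμ2
  obtain ⟨α, β, hval1, hval2, hα0, hβ0, hab, hab'⟩ := mu_roots μ hμ1 hμ2
  rintro ⟨p11, p12, p21, p22, hdet, heq⟩
  obtain ⟨U1, hU1⟩ : ∃ z:ℂ, z = p22*α - p12*1 := ⟨_, rfl⟩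
  obtain ⟨V1, hV1⟩ : ∃ z:ℂ, z = p11*1 - p21*α := ⟨_, rfl⟩
  obtain ⟨U2, hU2⟩ : ∃ z:ℂ, z = p22*(-α) - p12*1 := ⟨_, rfl⟩
  obtain ⟨V2, hV2⟩ : ∃ z:ℂ, z = p11*1 - p21*(-α) := ⟨_, rfl⟩
  obtain ⟨U3, hU3⟩ : ∃ z:ℂ, z = p22*β - p12*1 := ⟨_, rfl⟩
  obtain ⟨V3, hV3⟩ : ∃ z:ℂ, z = p11*1 - p21*β := ⟨_, rfl⟩
  have hT1 : 4*U1^3*V1 = 0 := by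
    have h : 4*U1^3*V1 = (p11*U1 + p12*V1)^4
        + 6*μ*(p11*U1 + p12*V1)^2*(p21*U1 + p22*V1)^2 + (p21*U1 + p22*V1)^4 := heq U1 V1
    rw [h, hU1, hV1]
    linear_combination ((p11*p22 - p12*p21)^4) * hval1
  have hT2 : 4*U2^3*V2 = 0 := by
    have h : 4*U2^3*V2 = (p11*U2 + p12*V2)^4
        + 6*μ*(p11*U2 + p12*V2)^2*(p21*U2 + p22*V2)^2 + (p21*U2 + p22*V2)^4 := heq U2 V2
    rw [h, hU2, hV2]
    linear_combination ((p11*p22 - p12*p21)^4) * hval1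
  have hT3 : 4*U3^3*V3 = 0 := by
    have h : 4*U3^3*V3 = (p11*U3 + p12*V3)^4
        + 6*μ*(p11*U3 + p12*V3)^2*(p21*U3 + p22*V3)^2 + (p21*U3 + p22*V3)^4 := heq U3 V3
    rw [h, hU3, hV3]
    linear_combination ((p11*p22 - p12*p21)^4) * hval2
  have mkd : ∀ U V : ℂ, 4*U^3*V = 0 → U = 0 ∨ V = 0 := by
    intro U V hT
    have hp : U^3*V = 0 := by linear_combination hT/4
    rcases mul_eq_zero.mp hp with h' | h'
    · exact Or.inl (pow_eq_zero_iff three_ne_zero |>.mp h')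
    · exact Or.inr h'
  have hd1 := mkd U1 V1 hT1
  have hd2 := mkd U2 V2 hT2
  have hd3 := mkd U3 V3 hT3
  have d12 : U1*V2 - U2*V1 ≠ 0 := by
    have e : U1*V2 - U2*V1 = (p11*p22 - p12*p21)*(2*α) := by rw [hU1,hV1,hU2,hV2]; ring
    rw [e]; exact mul_ne_zero hdet (mul_ne_zero two_ne_zero hα0)
  have d13 : U1*V3 - U3*V1 ≠ 0 := by
    have e : U1*V3 - U3*V1 = (p11*p22 - p12*p21)*(α - β) := by rw [hU1,hV1,hU3,hV3]; ring
    rw [e]; exact mul_ne_zero hdet (sub_ne_zero.mpr hab)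
  have d23 : U2*V3 - U3*V2 ≠ 0 := by
    have e : U2*V3 - U3*V2 = (p11*p22 - p12*p21)*(-(α + β)) := by rw [hU2,hV2,hU3,hV3]; ring
    rw [e]
    exact mul_ne_zero hdet (neg_ne_zero.mpr (fun h => hab' (eq_neg_of_add_eq_zero_left h)))
  rcases hd1 with h1 | h1 <;> rcases hd2 with h2 | h2 <;> rcases hd3 with h3 | h3 <;>
    first
    | (apply d12; rw [h1, h2]; ring1)
    | (apply d13; rw [h1, h3]; ring1)
    | (apply d23; rw [h2, h3]; ring1)

lemma item9 : ¬ QuarticGL2EquivC (fun x y => 6 * x ^ 2 * y ^ 2 + y ^ 4)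
    (fun x y => 6 * x ^ 2 * y ^ 2) := by
  obtain ⟨δ, hδ⟩ := exists_sqrtC (-(1/6))
  have hδ0 : δ ≠ 0 := by intro h; rw [h] at hδ; norm_num at hδ
  have hval : 6*δ^2 + 1 = 0 := by linear_combination 6*hδ
  rintro ⟨p11, p12, p21, p22, hdet, heq⟩
  obtain ⟨U1, hU1⟩ : ∃ z:ℂ, z = p22*1 - p12*0 := ⟨_, rfl⟩
  obtain ⟨V1, hV1⟩ : ∃ z:ℂ, z = p11*0 - p21*1 := ⟨_, rfl⟩
  obtain ⟨U2, hU2⟩ : ∃ z:ℂ, z = p22*δ - p12*1 := ⟨_, rfl⟩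
  obtain ⟨V2, hV2⟩ : ∃ z:ℂ, z = p11*1 - p21*δ := ⟨_, rfl⟩
  obtain ⟨U3, hU3⟩ : ∃ z:ℂ, z = p22*(-δ) - p12*1 := ⟨_, rfl⟩
  obtain ⟨V3, hV3⟩ : ∃ z:ℂ, z = p11*1 - p21*(-δ) := ⟨_, rfl⟩
  have hT1 : 6*U1^2*V1^2 = 0 := by
    have h : 6*U1^2*V1^2 = 6*(p11*U1 + p12*V1)^2*(p21*U1 + p22*V1)^2
        + (p21*U1 + p22*V1)^4 := heq U1 V1
    rw [h, hU1, hV1]; ring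
  have hT2 : 6*U2^2*V2^2 = 0 := by
    have h : 6*U2^2*V2^2 = 6*(p11*U2 + p12*V2)^2*(p21*U2 + p22*V2)^2
        + (p21*U2 + p22*V2)^4 := heq U2 V2
    rw [h, hU2, hV2]
    linear_combination ((p11*p22 - p12*p21)^4) * hval
  have hT3 : 6*U3^2*V3^2 = 0 := by
    have h : 6*U3^2*V3^2 = 6*(p11*U3 + p12*V3)^2*(p21*U3 + p22*V3)^2
        + (p21*U3 + p22*V3)^4 := heq U3 V3
    rw [h, hU3, hV3]
    linear_combination ((p11*p22 - p12*p21)^4) * hval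
  have mkd : ∀ U V : ℂ, 6*U^2*V^2 = 0 → U = 0 ∨ V = 0 := by
    intro U V hT
    have hp : (U*V)^2 = 0 := by linear_combination hT/6
    exact mul_eq_zero.mp (pow_eq_zero_iff two_ne_zero |>.mp hp)
  have hd1 := mkd U1 V1 hT1
  have hd2 := mkd U2 V2 hT2
  have hd3 := mkd U3 V3 hT3
  have d12 : U1*V2 - U2*V1 ≠ 0 := by
    have e : U1*V2 - U2*V1 = (p11*p22 - p12*p21)*1 := by rw [hU1,hV1,hU2,hV2]; ring
    rw [e]; simpa using hdet
  have d13 : U1*V3 - U3*V1 ≠ 0 := by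
    have e : U1*V3 - U3*V1 = (p11*p22 - p12*p21)*1 := by rw [hU1,hV1,hU3,hV3]; ring
    rw [e]; simpa using hdet
  have d23 : U2*V3 - U3*V2 ≠ 0 := by
    have e : U2*V3 - U3*V2 = (p11*p22 - p12*p21)*(2*δ) := by rw [hU2,hV2,hU3,hV3]; ring
    rw [e]; exact mul_ne_zero hdet (mul_ne_zero two_ne_zero hδ0)
  rcases hd1 with h1 | h1 <;> rcases hd2 with h2 | h2 <;> rcases hd3 with h3 | h3 <;>
    first
    | (apply d12; rw [h1, h2]; ring1)
    | (apply d13; rw [h1, h3]; ring1)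
    | (apply d23; rw [h2, h3]; ring1)

lemma item10 : ¬ QuarticGL2EquivC (fun x y => 6 * x ^ 2 * y ^ 2 + y ^ 4)
    (fun x y => 4 * x ^ 3 * y) := by
  obtain ⟨δ, hδ⟩ := exists_sqrtC (-(1/6))
  have hδ0 : δ ≠ 0 := by intro h; rw [h] at hδ; norm_num at hδ
  have hval : 6*δ^2 + 1 = 0 := by linear_combination 6*hδ
  rintro ⟨p11, p12, p21, p22, hdet, heq⟩
  obtain ⟨U1, hU1⟩ : ∃ z:ℂ, z = p22*1 - p12*0 := ⟨_, rfl⟩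
  obtain ⟨V1, hV1⟩ : ∃ z:ℂ, z = p11*0 - p21*1 := ⟨_, rfl⟩
  obtain ⟨U2, hU2⟩ : ∃ z:ℂ, z = p22*δ - p12*1 := ⟨_, rfl⟩
  obtain ⟨V2, hV2⟩ : ∃ z:ℂ, z = p11*1 - p21*δ := ⟨_, rfl⟩
  obtain ⟨U3, hU3⟩ : ∃ z:ℂ, z = p22*(-δ) - p12*1 := ⟨_, rfl⟩
  obtain ⟨V3, hV3⟩ : ∃ z:ℂ, z = p11*1 - p21*(-δ) := ⟨_, rfl⟩
  have hT1 : 4*U1^3*V1 = 0 := by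
    have h : 4*U1^3*V1 = 6*(p11*U1 + p12*V1)^2*(p21*U1 + p22*V1)^2
        + (p21*U1 + p22*V1)^4 := heq U1 V1
    rw [h, hU1, hV1]; ring
  have hT2 : 4*U2^3*V2 = 0 := by
    have h : 4*U2^3*V2 = 6*(p11*U2 + p12*V2)^2*(p21*U2 + p22*V2)^2
        + (p21*U2 + p22*V2)^4 := heq U2 V2
    rw [h, hU2, hV2]
    linear_combination ((p11*p22 - p12*p21)^4) * hval
  have hT3 : 4*U3^3*V3 = 0 := by
    have h : 4*U3^3*V3 = 6*(p11*U3 + p12*V3)^2*(p21*U3 + p22*V3)^2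
        + (p21*U3 + p22*V3)^4 := heq U3 V3
    rw [h, hU3, hV3]
    linear_combination ((p11*p22 - p12*p21)^4) * hval
  have mkd : ∀ U V : ℂ, 4*U^3*V = 0 → U = 0 ∨ V = 0 := by
    intro U V hT
    have hp : U^3*V = 0 := by linear_combination hT/4
    rcases mul_eq_zero.mp hp with h' | h'
    · exact Or.inl (pow_eq_zero_iff three_ne_zero |>.mp h')
    · exact Or.inr h'
  have hd1 := mkd U1 V1 hT1
  have hd2 := mkd U2 V2 hT2
  have hd3 := mkd U3 V3 hT3
  have d12 : U1*V2 - U2*V1 ≠ 0 := by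
    have e : U1*V2 - U2*V1 = (p11*p22 - p12*p21)*1 := by rw [hU1,hV1,hU2,hV2]; ring
    rw [e]; simpa using hdet
  have d13 : U1*V3 - U3*V1 ≠ 0 := by
    have e : U1*V3 - U3*V1 = (p11*p22 - p12*p21)*1 := by rw [hU1,hV1,hU3,hV3]; ring
    rw [e]; simpa using hdet
  have d23 : U2*V3 - U3*V2 ≠ 0 := by
    have e : U2*V3 - U3*V2 = (p11*p22 - p12*p21)*(2*δ) := by rw [hU2,hV2,hU3,hV3]; ring
    rw [e]; exact mul_ne_zero hdet (mul_ne_zero two_ne_zero hδ0)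
  rcases hd1 with h1 | h1 <;> rcases hd2 with h2 | h2 <;> rcases hd3 with h3 | h3 <;>
    first
    | (apply d12; rw [h1, h2]; ring1)
    | (apply d13; rw [h1, h3]; ring1)
    | (apply d23; rw [h2, h3]; ring1)

lemma item11 : ¬ QuarticGL2EquivC (fun x y => 6 * x ^ 2 * y ^ 2)
    (fun x y => 4 * x ^ 3 * y) := by
  rintro ⟨p11, p12, p21, p22, hdet, heq⟩
  have h10 : 4*(1:ℂ)^3*0 = 6*(p11*1 + p12*0)^2*(p21*1 + p22*0)^2 := heq 1 0
  have h01 : 4*(0:ℂ)^3*1 = 6*(p11*0 + p12*1)^2*(p21*0 + p22*1)^2 := heq 0 1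
  have h11 : 4*(1:ℂ)^3*1 = 6*(p11*1 + p12*1)^2*(p21*1 + p22*1)^2 := heq 1 1
  have h1m1 : 4*(1:ℂ)^3*(-1) = 6*(p11*1 + p12*(-1))^2*(p21*1 + p22*(-1))^2 := heq 1 (-1)
  have e1 : (p11*p21)^2 = 0 := by linear_combination (-1/6)*h10
  have e2 : (p12*p22)^2 = 0 := by linear_combination (-1/6)*h01
  have e1' := mul_eq_zero.mp (pow_eq_zero_iff two_ne_zero |>.mp e1)
  have e2' := mul_eq_zero.mp (pow_eq_zero_iff two_ne_zero |>.mp e2)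
  rcases e1' with h1 | h1 <;> rcases e2' with h2 | h2
  · exact hdet (by rw [h1, h2]; ring)
  · -- p11 = 0, p22 = 0
    rw [h1, h2] at h11 h1m1
    have : (8:ℂ) = 0 := by linear_combination h11 - h1m1
    norm_num at this
  · -- p21 = 0, p12 = 0
    rw [h1, h2] at h11 h1m1
    have : (8:ℂ) = 0 := by linear_combination h11 - h1m1
    norm_num at this
  · exact hdet (by rw [h1, h2]; ring)

/-- Every nonzero binary quartic over ℂ is GL₂(ℂ)-equivalent to at least one of the
canonical forms `x⁴`; `x⁴ + 6μx²y² + y⁴` (some `μ ≠ ±1/3`); `6x²y² + y⁴`; `6x²y²`; `4x³y`;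
and canonical forms from distinct items of this list are never GL₂(ℂ)-equivalent. -/
theorem stmt17 :
    (∀ a b c d e : ℂ, ¬(a = 0 ∧ b = 0 ∧ c = 0 ∧ d = 0 ∧ e = 0) →
      (QuarticGL2EquivC
          (fun x y => a * x ^ 4 + b * x ^ 3 * y + c * x ^ 2 * y ^ 2 + d * x * y ^ 3 + e * y ^ 4)
          (fun x _y => x ^ 4) ∨
        (∃ μ : ℂ, μ ≠ 1 / 3 ∧ μ ≠ -(1 / 3) ∧
          QuarticGL2EquivC
            (fun x y => a * x ^ 4 + b * x ^ 3 * y + c * x ^ 2 * y ^ 2 + d * x * y ^ 3 + e * y ^ 4)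
            (fun x y => x ^ 4 + 6 * μ * x ^ 2 * y ^ 2 + y ^ 4)) ∨
        QuarticGL2EquivC
          (fun x y => a * x ^ 4 + b * x ^ 3 * y + c * x ^ 2 * y ^ 2 + d * x * y ^ 3 + e * y ^ 4)
          (fun x y => 6 * x ^ 2 * y ^ 2 + y ^ 4) ∨
        QuarticGL2EquivC
          (fun x y => a * x ^ 4 + b * x ^ 3 * y + c * x ^ 2 * y ^ 2 + d * x * y ^ 3 + e * y ^ 4)
          (fun x y => 6 * x ^ 2 * y ^ 2) ∨
        QuarticGL2EquivC
          (fun x y => a * x ^ 4 + b * x ^ 3 * y + c * x ^ 2 * y ^ 2 + d * x * y ^ 3 + e * y ^ 4)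
          (fun x y => 4 * x ^ 3 * y))) ∧
    (∀ μ : ℂ, μ ≠ 1 / 3 → μ ≠ -(1 / 3) →
      ¬ QuarticGL2EquivC (fun x _y => x ^ 4)
        (fun x y => x ^ 4 + 6 * μ * x ^ 2 * y ^ 2 + y ^ 4)) ∧
    ¬ QuarticGL2EquivC (fun x _y => x ^ 4) (fun x y => 6 * x ^ 2 * y ^ 2 + y ^ 4) ∧
    ¬ QuarticGL2EquivC (fun x _y => x ^ 4) (fun x y => 6 * x ^ 2 * y ^ 2) ∧
    ¬ QuarticGL2EquivC (fun x _y => x ^ 4) (fun x y => 4 * x ^ 3 * y) ∧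
    (∀ μ : ℂ, μ ≠ 1 / 3 → μ ≠ -(1 / 3) →
      ¬ QuarticGL2EquivC (fun x y => x ^ 4 + 6 * μ * x ^ 2 * y ^ 2 + y ^ 4)
        (fun x y => 6 * x ^ 2 * y ^ 2 + y ^ 4)) ∧
    (∀ μ : ℂ, μ ≠ 1 / 3 → μ ≠ -(1 / 3) →
      ¬ QuarticGL2EquivC (fun x y => x ^ 4 + 6 * μ * x ^ 2 * y ^ 2 + y ^ 4)
        (fun x y => 6 * x ^ 2 * y ^ 2)) ∧
    (∀ μ : ℂ, μ ≠ 1 / 3 → μ ≠ -(1 / 3) →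
      ¬ QuarticGL2EquivC (fun x y => x ^ 4 + 6 * μ * x ^ 2 * y ^ 2 + y ^ 4)
        (fun x y => 4 * x ^ 3 * y)) ∧
    ¬ QuarticGL2EquivC (fun x y => 6 * x ^ 2 * y ^ 2 + y ^ 4) (fun x y => 6 * x ^ 2 * y ^ 2) ∧
    ¬ QuarticGL2EquivC (fun x y => 6 * x ^ 2 * y ^ 2 + y ^ 4) (fun x y => 4 * x ^ 3 * y) ∧
    ¬ QuarticGL2EquivC (fun x y => 6 * x ^ 2 * y ^ 2) (fun x y => 4 * x ^ 3 * y) :=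
  ⟨part1_s17, item2, item3, item4, item5, item6, item7, item8, item9, item10, item11⟩
end

section
/- The binary quartics f₃(x,y) = x⁴ + y⁴ and f₄(x,y) = x⁴ − y⁴ are not GL₂(ℝ)-equivalent, i.e. there is no invertible real 2×2 matrix P with f₄(u,v) = f₃(p₁₁u + p₁₂v, p₂₁u + p₂₂v); nevertheless their associated 2×2×2×2 symmetric tensors have identical spectral data: the tensor of f₃ has exactly four eigenpair classes, represented by (1,(1,0)), (1,(0,1)), (1,(1,1)) and (1,(1,−1)), and the tensor of f₄ has exactly four eigenpair classes, represented by (1,(1,0)), (−1,(0,1)), (1,(1,i)) and (1,(1,−i)), with no eigenpair class of either tensor having eigenvalue zero. -/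
/-- GL₂(ℝ)-equivalence of real binary forms (as functions). -/
def QuarticGL2EquivR (f g : ℝ → ℝ → ℝ) : Prop :=
  ∃ p11 p12 p21 p22 : ℝ, p11 * p22 - p12 * p21 ≠ 0 ∧
    ∀ u v : ℝ, g u v = f (p11 * u + p12 * v) (p21 * u + p22 * v)
lemma notGL2 : ¬ QuarticGL2EquivR (fun x y => x ^ 4 + y ^ 4) (fun x y => x ^ 4 - y ^ 4) := by
  rintro ⟨p11, p12, p21, p22, _, h⟩
  have h0 := h 0 1
  simp only at h0
  nlinarith [sq_nonneg (p12^2), sq_nonneg (p22^2)]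

lemma class3 : ∀ lam x y : ℂ, IsQuarticEigenpair 1 0 0 0 1 lam x y →
    QuarticEigenpairEquiv lam x y 1 1 0 ∨ QuarticEigenpairEquiv lam x y 1 0 1 ∨
      QuarticEigenpairEquiv lam x y 1 1 1 ∨ QuarticEigenpairEquiv lam x y 1 1 (-1) := by
  rintro lam x y ⟨hne, h1, h2⟩
  have h1' : x ^ 3 = lam * x := by linear_combination h1
  have h2' : y ^ 3 = lam * y := by linear_combination h2
  by_cases hx : x = 0
  · by_cases hy : y = 0
    · exact absurd (by simp [hx, hy]) hne
    · have hlam : y ^ 2 = lam := mul_right_cancel₀ hy (by linear_combination h2')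
      right; left
      exact ⟨y⁻¹, inv_ne_zero hy, by field_simp; linear_combination -hlam,
        by simp [hx], by field_simp⟩
  · have hlam : x ^ 2 = lam := mul_right_cancel₀ hx (by linear_combination h1')
    by_cases hy : y = 0
    · left
      exact ⟨x⁻¹, inv_ne_zero hx, by field_simp; linear_combination -hlam,
        by field_simp, by simp [hy]⟩
    · have hy2 : y ^ 2 = x ^ 2 := by
        have : y ^ 2 = lam := mul_right_cancel₀ hy (by linear_combination h2')
        rw [this, hlam]
      have : (y - x) * (y + x) = 0 := by linear_combination hy2
      rcases mul_eq_zero.1 this with h | h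
      · right; right; left
        have hyx : y = x := by linear_combination h
        exact ⟨x⁻¹, inv_ne_zero hx, by field_simp; linear_combination -hlam,
          by field_simp, by rw [hyx]; field_simp⟩
      · right; right; right
        have hyx : y = -x := by linear_combination h
        exact ⟨x⁻¹, inv_ne_zero hx, by field_simp; linear_combination -hlam,
          by field_simp, by rw [hyx]; field_simp⟩

lemma class4 : ∀ lam x y : ℂ, IsQuarticEigenpair 1 0 0 0 (-1) lam x y →
    QuarticEigenpairEquiv lam x y 1 1 0 ∨ QuarticEigenpairEquiv lam x y (-1) 0 1 ∨
      QuarticEigenpairEquiv lam x y 1 1 Complex.I ∨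
      QuarticEigenpairEquiv lam x y 1 1 (-Complex.I) := by
  rintro lam x y ⟨hne, h1, h2⟩
  have h1' : x ^ 3 = lam * x := by linear_combination h1
  have h2' : -(y ^ 3) = lam * y := by linear_combination h2
  by_cases hx : x = 0
  · by_cases hy : y = 0
    · exact absurd (by simp [hx, hy]) hne
    · have hlam : -(y ^ 2) = lam := mul_right_cancel₀ hy (by linear_combination h2')
      right; left
      exact ⟨y⁻¹, inv_ne_zero hy, by field_simp; linear_combination -hlam,
        by simp [hx], by field_simp⟩
  · have hlam : x ^ 2 = lam := mul_right_cancel₀ hx (by linear_combination h1')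
    by_cases hy : y = 0
    · left
      exact ⟨x⁻¹, inv_ne_zero hx, by field_simp; linear_combination -hlam,
        by field_simp, by simp [hy]⟩
    · have hy2 : -(y ^ 2) = x ^ 2 := by
        have : -(y ^ 2) = lam := mul_right_cancel₀ hy (by linear_combination h2')
        rw [this, hlam]
      have : (y - Complex.I * x) * (y + Complex.I * x) = 0 := by
        linear_combination -hy2 - x ^ 2 * Complex.I_sq
      rcases mul_eq_zero.1 this with h | h
      · right; right; left
        have hyx : y = Complex.I * x := by linear_combination h
        exact ⟨x⁻¹, inv_ne_zero hx, by field_simp; linear_combination -hlam,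
          by field_simp, by rw [hyx]; field_simp⟩
      · right; right; right
        have hyx : y = -(Complex.I * x) := by linear_combination h
        exact ⟨x⁻¹, inv_ne_zero hx, by field_simp; linear_combination -hlam,
          by field_simp, by rw [hyx]; field_simp⟩

lemma nz3 : ∀ lam x y : ℂ, IsQuarticEigenpair 1 0 0 0 1 lam x y → lam ≠ 0 := by
  rintro lam x y ⟨hne, h1, h2⟩ rfl
  have hx : x = 0 := by
    have : x ^ 3 = 0 := by linear_combination h1
    exact pow_eq_zero_iff (by norm_num) |>.1 this
  have hy : y = 0 := by
    have : y ^ 3 = 0 := by linear_combination h2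
    exact pow_eq_zero_iff (by norm_num) |>.1 this
  exact hne (by simp [hx, hy])

lemma nz4 : ∀ lam x y : ℂ, IsQuarticEigenpair 1 0 0 0 (-1) lam x y → lam ≠ 0 := by
  rintro lam x y ⟨hne, h1, h2⟩ rfl
  have hx : x = 0 := by
    have : x ^ 3 = 0 := by linear_combination h1
    exact pow_eq_zero_iff (by norm_num) |>.1 this
  have hy : y = 0 := by
    have : y ^ 3 = 0 := by linear_combination -h2
    exact pow_eq_zero_iff (by norm_num) |>.1 this
  exact hne (by simp [hx, hy])

/-- `f₃ = x⁴ + y⁴` and `f₄ = x⁴ − y⁴` are not GL₂(ℝ)-equivalent, yet their tensors have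
identical spectral data: each has exactly four eigenpair classes (representatives listed)
and no eigenpair class with eigenvalue zero.  Here `f₃` has quartic coefficients
`(1,0,0,0,1)` and `f₄` has `(1,0,0,0,−1)`. -/
theorem stmt18 :
    ¬ QuarticGL2EquivR (fun x y => x ^ 4 + y ^ 4) (fun x y => x ^ 4 - y ^ 4) ∧
    -- spectral data of the tensor of f₃ = x⁴ + y⁴
    (IsQuarticEigenpair 1 0 0 0 1 1 1 0 ∧
     IsQuarticEigenpair 1 0 0 0 1 1 0 1 ∧
     IsQuarticEigenpair 1 0 0 0 1 1 1 1 ∧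
     IsQuarticEigenpair 1 0 0 0 1 1 1 (-1) ∧
     ¬ QuarticEigenpairEquiv 1 1 0 1 0 1 ∧
     ¬ QuarticEigenpairEquiv 1 1 0 1 1 1 ∧
     ¬ QuarticEigenpairEquiv 1 1 0 1 1 (-1) ∧
     ¬ QuarticEigenpairEquiv 1 0 1 1 1 1 ∧
     ¬ QuarticEigenpairEquiv 1 0 1 1 1 (-1) ∧
     ¬ QuarticEigenpairEquiv 1 1 1 1 1 (-1) ∧
     (∀ lam x y : ℂ, IsQuarticEigenpair 1 0 0 0 1 lam x y →
        QuarticEigenpairEquiv lam x y 1 1 0 ∨ QuarticEigenpairEquiv lam x y 1 0 1 ∨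
          QuarticEigenpairEquiv lam x y 1 1 1 ∨ QuarticEigenpairEquiv lam x y 1 1 (-1)) ∧
     (∀ lam x y : ℂ, IsQuarticEigenpair 1 0 0 0 1 lam x y → lam ≠ 0)) ∧
    -- spectral data of the tensor of f₄ = x⁴ − y⁴
    (IsQuarticEigenpair 1 0 0 0 (-1) 1 1 0 ∧
     IsQuarticEigenpair 1 0 0 0 (-1) (-1) 0 1 ∧
     IsQuarticEigenpair 1 0 0 0 (-1) 1 1 Complex.I ∧
     IsQuarticEigenpair 1 0 0 0 (-1) 1 1 (-Complex.I) ∧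
     ¬ QuarticEigenpairEquiv 1 1 0 (-1) 0 1 ∧
     ¬ QuarticEigenpairEquiv 1 1 0 1 1 Complex.I ∧
     ¬ QuarticEigenpairEquiv 1 1 0 1 1 (-Complex.I) ∧
     ¬ QuarticEigenpairEquiv (-1) 0 1 1 1 Complex.I ∧
     ¬ QuarticEigenpairEquiv (-1) 0 1 1 1 (-Complex.I) ∧
     ¬ QuarticEigenpairEquiv 1 1 Complex.I 1 1 (-Complex.I) ∧
     (∀ lam x y : ℂ, IsQuarticEigenpair 1 0 0 0 (-1) lam x y →
        QuarticEigenpairEquiv lam x y 1 1 0 ∨ QuarticEigenpairEquiv lam x y (-1) 0 1 ∨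
          QuarticEigenpairEquiv lam x y 1 1 Complex.I ∨
          QuarticEigenpairEquiv lam x y 1 1 (-Complex.I)) ∧
     (∀ lam x y : ℂ, IsQuarticEigenpair 1 0 0 0 (-1) lam x y → lam ≠ 0)) := by
  refine ⟨notGL2,
    ⟨⟨by norm_num, by ring, by ring⟩, ⟨by norm_num, by ring, by ring⟩,
     ⟨by norm_num, by ring, by ring⟩, ⟨by norm_num, by ring, by ring⟩,
     ?_, ?_, ?_, ?_, ?_, ?_, class3, nz3⟩,
    ⟨⟨by norm_num, by ring, by ring⟩, ⟨by norm_num, by ring, by ring⟩,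
     ⟨by norm_num, by ring, ?_⟩, ⟨by norm_num, by ring, ?_⟩,
     ?_, ?_, ?_, ?_, ?_, ?_, class4, nz4⟩⟩
  · rintro ⟨t, ht, h1, h2, h3⟩; simp at h3
  · rintro ⟨t, ht, h1, h2, h3⟩; simp at h3
  · rintro ⟨t, ht, h1, h2, h3⟩; simp at h3
  · rintro ⟨t, ht, h1, h2, h3⟩; simp at h2
  · rintro ⟨t, ht, h1, h2, h3⟩; simp at h2
  · rintro ⟨t, ht, h1, h2, h3⟩
    simp only [mul_one] at h2 h3; rw [h2] at h3; norm_num at h3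
  · linear_combination -Complex.I * Complex.I_sq
  · linear_combination Complex.I * Complex.I_sq
  · rintro ⟨t, ht, h1, h2, h3⟩; simp only [mul_one] at h2; exact ht h2
  · rintro ⟨t, ht, h1, h2, h3⟩
    exact Complex.I_ne_zero (by linear_combination -h3)
  · rintro ⟨t, ht, h1, h2, h3⟩
    exact Complex.I_ne_zero (by linear_combination h3)
  · rintro ⟨t, ht, h1, h2, h3⟩; simp at h2
  · rintro ⟨t, ht, h1, h2, h3⟩; simp at h2
  · rintro ⟨t, ht, h1, h2, h3⟩
    exact Complex.I_ne_zero (by linear_combination (-Complex.I / 2) * h2 + h3 / 2)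
end
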